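/- arXiv:2210.10588 — 6 statements merged into one kernel-verified Lean document; each statement's English description precedes it below -/
import Mathlib

section
/- For every integer k ≥ 2, the alternating sum S'_k = Σ_{j=1}^{k} ((-1)^{j-1}/j) · Σ_{k_1+⋯+k_j=k, k_i≥1} k·k!/(k_1!⋯k_j!) equals zero. -/
open scoped BigOperators

open PowerSeries Finset

noncomputable section AuxAltSum

/-- `E = e^X - 1` as a formal power series over `ℝ`. -/
def Ealt : ℝ⟦X⟧ := PowerSeries.exp ℝ - 1

lemma coeff_Ealt (m : ℕ) :
    coeff m Ealt = if m = 0 then 0 else (1 : ℝ) / (Nat.factorial m) := by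
  simp only [Ealt, map_sub, coeff_exp, coeff_one]
  have h : (algebraMap ℚ ℝ) (1 / (Nat.factorial m : ℚ)) = 1 / (Nat.factorial m : ℝ) := by
    push_cast [map_div₀]
    simp
  rw [h]
  split_ifs with hm
  · subst hm; simp
  · simp

lemma constantCoeff_Ealt : constantCoeff Ealt = 0 := by
  have := coeff_Ealt 0
  simpa using this

lemma coeff_Ealt_pow_eq_zero {m j : ℕ} (h : m < j) : coeff m (Ealt ^ j) = 0 := by
  obtain ⟨g, hg⟩ := PowerSeries.X_dvd_iff.mpr constantCoeff_Ealt
  rw [hg, mul_pow, coeff_X_pow_mul', if_neg (by omega)]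

lemma deriv_exp_alt : d⁄dX ℝ (PowerSeries.exp ℝ) = PowerSeries.exp ℝ := by
  ext n
  rw [PowerSeries.coeff_derivative, coeff_exp, coeff_exp]
  have h : ∀ r : ℚ, (algebraMap ℚ ℝ) r = (r : ℝ) := fun r => by simp
  rw [h, h]
  rw [Nat.factorial_succ]
  push_cast
  have h1 : (Nat.factorial n : ℝ) ≠ 0 := Nat.cast_ne_zero.mpr (Nat.factorial_ne_zero n)
  have h2 : ((n : ℝ) + 1) ≠ 0 := by positivity
  field_simp

lemma deriv_Ealt : d⁄dX ℝ Ealt = PowerSeries.exp ℝ := by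
  have : d⁄dX ℝ Ealt = d⁄dX ℝ (PowerSeries.exp ℝ) - d⁄dX ℝ (1 : ℝ⟦X⟧) := by
    rw [← map_sub]; rfl
  rw [this, deriv_exp_alt, Derivation.map_one_eq_zero, sub_zero]

lemma coeff_F_zero (k : ℕ) (hk : 2 ≤ k) :
    coeff k (∑ j ∈ Icc 1 k, ((-1 : ℝ) ^ (j - 1) / (j : ℝ)) • Ealt ^ j) = 0 := by
  set F : ℝ⟦X⟧ := ∑ j ∈ Icc 1 k, ((-1 : ℝ) ^ (j - 1) / (j : ℝ)) • Ealt ^ j with hF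
  have hd : d⁄dX ℝ F = (∑ i ∈ range k, (-Ealt) ^ i) * PowerSeries.exp ℝ := by
    rw [hF, map_sum]
    have key : ∀ j ∈ Icc 1 k,
        d⁄dX ℝ (((-1 : ℝ) ^ (j - 1) / (j : ℝ)) • Ealt ^ j)
          = (-Ealt) ^ (j - 1) * PowerSeries.exp ℝ := by
      intro j hj
      obtain ⟨hj1, hj2⟩ := mem_Icc.mp hj
      have hj0 : (j : ℝ) ≠ 0 := Nat.cast_ne_zero.mpr (by omega)
      rw [Derivation.map_smul, Derivation.leibniz_pow, deriv_Ealt]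
      rw [smul_eq_mul, nsmul_eq_mul, PowerSeries.smul_eq_C_mul,
        ← map_natCast (C (R := ℝ)) j, ← mul_assoc, ← map_mul, div_mul_cancel₀ _ hj0]
      rw [show ((-Ealt) ^ (j-1) : ℝ⟦X⟧) = C (R := ℝ) ((-1 : ℝ) ^ (j-1)) * Ealt ^ (j-1) by
        rw [neg_pow Ealt, map_pow, map_neg, map_one]]
      ring
    rw [sum_congr rfl key, ← sum_mul]
    congr 1
    rw [show Icc 1 k = Ico 1 (k+1) by rfl, Finset.sum_Ico_eq_sum_range]
    simp
  have hgeom : (∑ i ∈ range k, (-Ealt) ^ i) * PowerSeries.exp ℝ = 1 - (-Ealt) ^ k := by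
    have h1 := geom_sum_mul (-Ealt) k
    have h2 : PowerSeries.exp ℝ = 1 - (-Ealt) := by rw [Ealt]; ring
    rw [h2]
    linear_combination -h1
  have h3 : coeff (k - 1) (d⁄dX ℝ F) = 0 := by
    rw [hd, hgeom, map_sub, PowerSeries.coeff_one, if_neg (by omega : ¬ (k - 1 = 0))]
    rw [show ((-Ealt) ^ k : ℝ⟦X⟧) = C (R := ℝ) ((-1 : ℝ) ^ k) * Ealt ^ k by
        rw [neg_pow Ealt, map_pow, map_neg, map_one], coeff_C_mul,
      coeff_Ealt_pow_eq_zero (by omega : k - 1 < k)]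
    ring
  rw [PowerSeries.coeff_derivative, show k - 1 + 1 = k by omega] at h3
  have hk0 : ((k - 1 : ℕ) : ℝ) + 1 ≠ 0 := by positivity
  exact (mul_eq_zero.mp h3).resolve_right hk0

/-- grouping the composition sum as the k-th coefficient of F -/
lemma sum_compositions (k : ℕ) (hk : 2 ≤ k) :
    ∑ c : Composition k, ((-1 : ℝ) ^ (c.length - 1) / (c.length : ℝ)) *
        ∏ i : Fin c.length, coeff (c.blocksFun i) Ealt
    = coeff k (∑ j ∈ Icc 1 k, ((-1 : ℝ) ^ (j - 1) / (j : ℝ)) • Ealt ^ j) := by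
  rw [map_sum]
  have step1 : ∀ j ∈ Icc 1 k,
      coeff k (((-1 : ℝ) ^ (j - 1) / (j : ℝ)) • Ealt ^ j)
        = ∑ l ∈ (finsuppAntidiag (range j) k).filter (fun l => ∀ i ∈ range j, 0 < l i),
            ((-1 : ℝ) ^ (j - 1) / (j : ℝ)) * ∏ i ∈ range j, coeff (l i) Ealt := by
    intro j hj
    rw [LinearMap.map_smul, smul_eq_mul, PowerSeries.coeff_pow, Finset.mul_sum]
    rw [Finset.sum_filter_of_ne]
    intro l hl hne i hi
    by_contra h0
    push_neg at h0
    apply hne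
    have hli : l i = 0 := by omega
    rw [Finset.prod_eq_zero hi (by rw [hli]; simpa using constantCoeff_Ealt), mul_zero]
  rw [sum_congr rfl step1, Finset.sum_sigma']
  refine Finset.sum_bij'
    (i := fun (c : Composition k) _ => (⟨c.length, c.blocks.toFinsupp⟩ : Σ _ : ℕ, (ℕ →₀ ℕ)))
    (j := fun p hp =>
      { blocks := (List.range p.1).map p.2
        blocks_pos := ?_
        blocks_sum := ?_ })
    ?_ ?_ ?_ ?_ ?_
  · -- blocks_pos
    intro i hi
    obtain ⟨a, ha, rfl⟩ := List.mem_map.mp hi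
    have hp' := (Finset.mem_filter.mp (Finset.mem_sigma.mp hp).2).2
    exact hp' a (Finset.mem_range.mpr (List.mem_range.mp ha))
  · -- blocks_sum
    have h1 := (Finset.mem_finsuppAntidiag.mp (Finset.mem_filter.mp (Finset.mem_sigma.mp hp).2).1).1
    rw [show ((List.range p.1).map p.2).sum = ∑ i ∈ range p.1, p.2 i from rfl]
    exact h1
  · -- hi : image of a composition lies in the sigma set
    intro c _
    rw [Finset.mem_sigma]
    constructor
    · exact Finset.mem_Icc.mpr ⟨c.length_pos_of_pos (by omega), c.length_le⟩
    · rw [Finset.mem_filter]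
      refine ⟨Finset.mem_finsuppAntidiag.mpr ⟨?_, ?_⟩, ?_⟩
      · rw [← Fin.sum_univ_eq_sum_range]
        rw [show (∑ i : Fin c.length, c.blocks.toFinsupp i)
            = ∑ i : Fin c.blocks.length, c.blocks.toFinsupp i from rfl]
        rw [Finset.sum_congr rfl (fun i _ => List.toFinsupp_apply_fin c.blocks i)]
        simp only [Fin.getElem_fin]
        rw [Fin.sum_univ_getElem]
        exact c.blocks_sum
      · rw [List.toFinsupp_support]
        exact Finset.filter_subset _ _
      · intro i hi
        have hi' : i < c.blocks.length := Finset.mem_range.mp hi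
        rw [List.toFinsupp_apply_lt _ _ hi']
        exact c.blocks_pos' i hi'
  · -- hj : inverse lands in univ
    intro p hp
    exact Finset.mem_univ _
  · -- left inverse
    intro c _
    apply Composition.ext
    apply List.ext_getElem
    · simp
    · intro n h1 h2
      simp only [List.getElem_map, List.getElem_range]
      exact List.toFinsupp_apply_lt _ _ (by simpa using h2)
  · -- right inverse
    intro p hp
    rcases p with ⟨j, l⟩
    dsimp only at hp ⊢
    have hmem := Finset.mem_sigma.mp hp
    have hsupp := (Finset.mem_finsuppAntidiag.mp (Finset.mem_filter.mp hmem.2).1).2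
    refine Sigma.ext ?_ (heq_of_eq ?_)
    · simp [Composition.length]
    · ext i
      by_cases hij : i < j
      · rw [List.toFinsupp_apply_lt _ _ (by simpa using hij)]
        simp
      · rw [List.toFinsupp_apply_le _ _ (by simpa using hij)]
        by_contra h0
        have hs : i ∈ l.support := Finsupp.mem_support_iff.mpr (fun h => h0 h.symm)
        have hlt : i < j := Finset.mem_range.mp (hsupp hs)
        exact hij hlt
  · -- values agree
    intro c _
    congr 1
    rw [← Fin.prod_univ_eq_prod_range]
    refine Finset.prod_congr rfl fun i _ => ?_
    rw [List.toFinsupp_apply_fin c.blocks i]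
    rfl

end AuxAltSum

/-- For every integer `k ≥ 2`,
`S'_k = Σ_{j=1}^{k} ((-1)^{j-1}/j) · Σ_{k_1+⋯+k_j=k, k_i ≥ 1} k·k!/(k_1!⋯k_j!) = 0`.
The inner sum over ordered compositions of `k` into `j` positive parts is realized as a
sum over `Composition k`, where `c.length` plays the role of `j`. -/
theorem alternating_composition_sum_with_k (k : ℕ) (hk : 2 ≤ k) :
    ∑ c : Composition k,
      ((-1 : ℝ) ^ (c.length - 1) / (c.length : ℝ)) *
        ((k : ℝ) * (Nat.factorial k : ℝ) /
          ∏ i : Fin c.length, (Nat.factorial (c.blocksFun i) : ℝ)) = 0 := by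
  have h1 : ∀ c : Composition k,
      ((-1 : ℝ) ^ (c.length - 1) / (c.length : ℝ)) *
        ((k : ℝ) * (Nat.factorial k : ℝ) /
          ∏ i : Fin c.length, (Nat.factorial (c.blocksFun i) : ℝ))
      = ((k : ℝ) * (Nat.factorial k : ℝ)) *
        (((-1 : ℝ) ^ (c.length - 1) / (c.length : ℝ)) *
          ∏ i : Fin c.length, coeff (c.blocksFun i) Ealt) := by
    intro c
    have hb : ∀ i : Fin c.length, coeff (c.blocksFun i) Ealt
        = 1 / (Nat.factorial (c.blocksFun i) : ℝ) := by
      intro i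
      rw [coeff_Ealt, if_neg (Nat.one_le_iff_ne_zero.mp (c.one_le_blocksFun i))]
    rw [Finset.prod_congr rfl (fun i _ => hb i)]
    rw [show (∏ i : Fin c.length, 1 / (Nat.factorial (c.blocksFun i) : ℝ))
        = 1 / ∏ i : Fin c.length, (Nat.factorial (c.blocksFun i) : ℝ) by
      simp [Finset.prod_div_distrib]]
    ring
  rw [Finset.sum_congr rfl (fun c _ => h1 c), ← Finset.mul_sum,
    sum_compositions k hk, coeff_F_zero k hk, mul_zero]
end

section
/- For every integer k ≥ 3, the sum S_k = Σ_{j=1}^{k} ((-1)^{j-1}/j) · Σ_{k_1+⋯+k_j=k, k_i≥1} k!·(k_1(k_1−1)+⋯+k_j(k_j−1))/(k_1!⋯k_j!) equals zero. -/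
open scoped BigOperators

namespace AltCompAux

open List Finset

/-- weight of a list of blocks: `(-1)^length / ∏ (bᵢ)!` -/
noncomputable def wt (l : List ℕ) : ℝ :=
  (-1) ^ l.length / (l.map fun x => (Nat.factorial x : ℝ)).prod

lemma wt_nil : wt [] = 1 := by simp [wt]

lemma wt_cons (a : ℕ) (l : List ℕ) :
    wt (a :: l) = -(1 / (Nat.factorial a : ℝ)) * wt l := by
  have h1 : (Nat.factorial a : ℝ) ≠ 0 := Nat.cast_ne_zero.2 (Nat.factorial_ne_zero a)
  have h2 : (l.map fun x => (Nat.factorial x : ℝ)).prod ≠ 0 := by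
    apply List.prod_ne_zero
    intro h; rw [List.mem_map] at h
    obtain ⟨x, _, hx⟩ := h
    exact Nat.cast_ne_zero.2 (Nat.factorial_ne_zero x) hx
  simp only [wt, List.map_cons, List.prod_cons, List.length_cons, pow_succ]
  field_simp

lemma comp_blocks_ne_nil {n : ℕ} (c : Composition (n + 1)) : c.blocks ≠ [] := by
  intro h
  have := c.blocks_sum
  rw [h] at this
  simp at this

/-- the sigma data of the head and tail of a composition of `n+1`. -/
def tailComp {n : ℕ} (c : Composition (n + 1)) : Σ _ : ℕ, List ℕ :=
  ⟨c.blocks.head! - 1, c.blocks.tail⟩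

lemma head_add_tail {n : ℕ} (c : Composition (n + 1)) :
    c.blocks.head! + c.blocks.tail.sum = n + 1 := by
  have h := c.blocks_sum
  rw [← List.cons_head!_tail (comp_blocks_ne_nil c)] at h
  simpa using h

lemma head_pos {n : ℕ} (c : Composition (n + 1)) : 0 < c.blocks.head! :=
  c.blocks_pos (by
    rw [← List.cons_head!_tail (comp_blocks_ne_nil c)]
    exact List.mem_cons_self)

/-- reconstructing a composition of `n+1` with first block `m+1` from `m ≤ n` and a
composition of `n - m`. -/
def consComp (n : ℕ) (x : Σ m : ℕ, Composition (n - m)) : Composition (n + 1) :=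
  if h : x.1 ≤ n then
    ⟨(x.1 + 1) :: x.2.blocks,
     by
      intro i hi
      rcases List.mem_cons.1 hi with h' | h'
      · omega
      · exact x.2.blocks_pos h',
     by
      have := x.2.blocks_sum
      simp only [List.sum_cons, this]
      omega⟩
  else Composition.single (n + 1) (Nat.succ_pos n)

lemma comp_heq {a b : ℕ} (c₁ : Composition a) (c₂ : Composition b)
    (h : c₁.blocks = c₂.blocks) : HEq c₁ c₂ := by
  have h2 : (⟨a, c₁⟩ : Σ n, Composition n) = ⟨b, c₂⟩ :=
    Composition.sigma_eq_iff_blocks_eq.2 h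
  exact (Sigma.mk.inj_iff.mp h2).2

/-- Splitting a sum over compositions of `n+1` according to the first block. -/
lemma sum_composition_succ {M : Type*} [AddCommMonoid M] (n : ℕ) (f : List ℕ → M) :
    ∑ c : Composition (n + 1), f c.blocks
      = ∑ m ∈ Finset.range (n + 1), ∑ c : Composition (n - m), f ((m + 1) :: c.blocks) := by
  rw [← Finset.sum_sigma (Finset.range (n + 1))
      (fun m => (Finset.univ : Finset (Composition (n - m))))
      (fun x => f ((x.1 + 1) :: x.2.blocks))]
  refine Finset.sum_nbij'
    (i := fun c => (⟨c.blocks.head! - 1, ⟨c.blocks.tail,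
      fun hi => c.blocks_pos (List.mem_of_mem_tail hi),
      by have := head_add_tail c; have := head_pos c; omega⟩⟩ :
        Σ m : ℕ, Composition (n - m)))
    (j := fun x => consComp n x) ?_ ?_ ?_ ?_ ?_
  · intro c _
    have h1 := head_add_tail c
    have h2 := head_pos c
    simp only [Finset.mem_sigma, Finset.mem_range, Finset.mem_univ, and_true]
    omega
  · intro x _; exact Finset.mem_univ _
  · intro c _
    have h1 := head_add_tail c
    have h2 := head_pos c
    have hle : c.blocks.head! - 1 ≤ n := by omega
    apply Composition.ext
    simp only [consComp, dif_pos hle]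
    have : c.blocks.head! - 1 + 1 = c.blocks.head! := by omega
    rw [this]
    exact List.cons_head!_tail (comp_blocks_ne_nil c)
  · rintro ⟨m, c⟩ hx
    simp only [Finset.mem_sigma, Finset.mem_range, Finset.mem_univ, and_true] at hx
    have hle : m ≤ n := by omega
    have hb : (consComp n ⟨m, c⟩).blocks = (m + 1) :: c.blocks := by
      simp only [consComp, dif_pos hle]
    refine Sigma.ext ?_ (comp_heq _ _ ?_)
    · show (consComp n ⟨m, c⟩).blocks.head! - 1 = m
      rw [hb]; rfl
    · show (consComp n ⟨m, c⟩).blocks.tail = c.blocks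
      rw [hb]; rfl
  · intro c _
    have h2 := head_pos c
    have h3 : c.blocks.head! - 1 + 1 = c.blocks.head! := by omega
    show f c.blocks = f ((c.blocks.head! - 1 + 1) :: c.blocks.tail)
    rw [h3, List.cons_head!_tail (comp_blocks_ne_nil c)]

/-- `E n = ∑ over compositions of n of wt blocks`. -/
noncomputable def E (n : ℕ) : ℝ := ∑ c : Composition n, wt c.blocks

lemma E_succ (n : ℕ) :
    E (n + 1) = ∑ m ∈ Finset.range (n + 1), -(1 / (Nat.factorial (m + 1) : ℝ)) * E (n - m) := by
  rw [E, sum_composition_succ n wt]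
  refine Finset.sum_congr rfl fun m _ => ?_
  rw [E, Finset.mul_sum]
  exact Finset.sum_congr rfl fun c _ => wt_cons _ _

lemma comp_zero_blocks (c : Composition 0) : c.blocks = [] := by
  cases hb : c.blocks with
  | nil => rfl
  | cons a l =>
    have h1 := c.blocks_pos (hb ▸ (List.mem_cons_self : a ∈ a :: l))
    have h2 := c.blocks_sum
    rw [hb] at h2
    simp only [List.sum_cons] at h2
    omega

lemma E_zero : E 0 = 1 := by
  haveI : Subsingleton (Composition 0) :=
    ⟨fun a b => Composition.ext (by rw [comp_zero_blocks a, comp_zero_blocks b])⟩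
  rw [E, Fintype.sum_subsingleton _ (Composition.ones 0)]
  rw [comp_zero_blocks (Composition.ones 0), wt_nil]

lemma fact_ne_zero' (m : ℕ) : (Nat.factorial m : ℝ) ≠ 0 :=
  Nat.cast_ne_zero.2 (Nat.factorial_ne_zero m)

lemma sign_sub {n m : ℕ} (h : m ≤ n) : (-1 : ℝ) ^ (n - m) = (-1) ^ n * (-1) ^ m := by
  rw [← pow_add, show n + m = (n - m) + 2 * m by omega, pow_add, pow_mul]
  norm_num

lemma alt_choose_sum (n : ℕ) :
    ∑ m ∈ Finset.range (n + 1), (-1 : ℝ) ^ m * (Nat.choose (n + 1) (m + 1) : ℝ) = 1 := by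
  have hz : ∑ i ∈ Finset.range (n + 2), (-1 : ℝ) ^ i * (Nat.choose (n + 1) i : ℝ) = 0 := by
    have := Int.alternating_sum_range_choose_of_ne (Nat.succ_ne_zero n)
    exact_mod_cast congrArg (fun z : ℤ => (z : ℝ)) this
  rw [Finset.sum_range_succ' _ (n + 1)] at hz
  have h2 : ∀ i ∈ Finset.range (n + 1), (-1 : ℝ) ^ i * ((Nat.choose (n + 1) (i + 1)) : ℝ)
      = -((-1) ^ (i + 1) * ((Nat.choose (n + 1) (i + 1)) : ℝ)) := fun i _ => by ring
  rw [Finset.sum_congr rfl h2, Finset.sum_neg_distrib]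
  norm_num at hz ⊢
  linarith

lemma E_eq (n : ℕ) : E n = (-1) ^ n / (Nat.factorial n : ℝ) := by
  induction n using Nat.strong_induction_on with
  | _ n ih =>
    match n with
    | 0 => rw [E_zero]; simp
    | (n + 1) =>
      rw [E_succ]
      have step : ∀ m ∈ Finset.range (n + 1),
          -(1 / (Nat.factorial (m + 1) : ℝ)) * E (n - m)
            = ((-1) ^ m * (Nat.choose (n + 1) (m + 1) : ℝ))
                * ((-1) ^ (n + 1) / (Nat.factorial (n + 1) : ℝ)) := by
        intro m hm
        rw [Finset.mem_range] at hm
        have hmn : m ≤ n := by omega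
        rw [ih (n - m) (by omega)]
        have hch : ((n + 1).choose (m + 1) : ℝ) * (Nat.factorial (m + 1) : ℝ)
            * (Nat.factorial (n - m) : ℝ) = (Nat.factorial (n + 1) : ℝ) := by
          have h := Nat.choose_mul_factorial_mul_factorial (show m + 1 ≤ n + 1 by omega)
          have h2 : n + 1 - (m + 1) = n - m := by omega
          rw [h2] at h
          exact_mod_cast h
        have hs := sign_sub hmn
        rw [hs]
        field_simp
        linear_combination ((-1 : ℝ) ^ n) * hch
      rw [Finset.sum_congr rfl step, ← Finset.sum_mul, alt_choose_sum, one_mul]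

/-- rotation of a composition's blocks -/
def rotC {n : ℕ} (c : Composition n) (i : ℕ) : Composition n :=
  ⟨c.blocks.rotate i, fun hj => c.blocks_pos (List.mem_rotate.1 hj),
   by rw [(List.rotate_perm c.blocks i).sum_eq, c.blocks_sum]⟩

lemma rotC_blocks {n : ℕ} (c : Composition n) (i : ℕ) :
    (rotC c i).blocks = c.blocks.rotate i := rfl

lemma rotC_length {n : ℕ} (c : Composition n) (i : ℕ) :
    (rotC c i).length = c.length := List.length_rotate c.blocks i

/-- the rotation bijection on pairs (composition, block index) -/
def rotEquiv (n : ℕ) : (Σ c : Composition n, Fin c.length) ≃ (Σ c : Composition n, Fin c.length) where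
  toFun x := ⟨rotC x.1 x.2, ⟨x.2, by rw [rotC_length]; exact x.2.2⟩⟩
  invFun x := ⟨rotC x.1 (x.1.length - x.2), ⟨x.2, by rw [rotC_length]; exact x.2.2⟩⟩
  left_inv := by
    rintro ⟨c, i⟩
    have hi : (i : ℕ) ≤ c.length := le_of_lt i.2
    have h1 : rotC (rotC c (i : ℕ)) ((rotC c (i : ℕ)).length - (i : ℕ)) = c := by
      apply Composition.ext
      show (c.blocks.rotate i).rotate ((rotC c (i : ℕ)).length - i) = c.blocks
      rw [rotC_length, List.rotate_rotate,
        show (i : ℕ) + (c.length - i) = c.blocks.length by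
          simp only [Composition.length] at hi ⊢; omega]
      exact List.rotate_length c.blocks
    exact Sigma.ext h1 ((Fin.heq_ext_iff (congrArg Composition.length h1)).2 rfl)
  right_inv := by
    rintro ⟨c, i⟩
    have hi : (i : ℕ) ≤ c.length := le_of_lt i.2
    have h1 : rotC (rotC c (c.length - (i : ℕ))) (i : ℕ) = c := by
      apply Composition.ext
      show (c.blocks.rotate (c.length - i)).rotate i = c.blocks
      rw [List.rotate_rotate,
        show (c.length - (i : ℕ)) + i = c.blocks.length by
          simp only [Composition.length] at hi ⊢; omega]
      exact List.rotate_length c.blocks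
    exact Sigma.ext h1 ((Fin.heq_ext_iff (congrArg Composition.length h1)).2 rfl)

lemma prod_fact_eq {n : ℕ} (c : Composition n) :
    ∏ i : Fin c.length, (Nat.factorial (c.blocksFun i) : ℝ)
      = (c.blocks.map fun x => (Nat.factorial x : ℝ)).prod := by
  rw [← Composition.ofFn_blocksFun c, List.map_ofFn, List.prod_ofFn]
  rfl

lemma blocksFun_rot {n : ℕ} (c : Composition n) (i : Fin c.length) (h0 : 0 < (rotC c i).length) :
    (rotC c (i : ℕ)).blocksFun ⟨0, h0⟩ = c.blocksFun i := by
  have := List.get_rotate c.blocks (i : ℕ) ⟨0, by simpa [rotC_length] using h0⟩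
  simp only [Composition.blocksFun, rotC_blocks] at *
  refine this.trans ?_
  congr 1
  apply Fin.ext
  simp only [Nat.zero_add]
  exact Nat.mod_eq_of_lt i.2

lemma get_zero_eq_head! (l : List ℕ) (h : 0 < l.length) : l.get ⟨0, h⟩ = l.head! := by
  cases l with
  | nil => simp at h
  | cons a t => rfl

lemma prod_map_fact_ne_zero (l : List ℕ) :
    (l.map fun x => (Nat.factorial x : ℝ)).prod ≠ 0 := by
  apply List.prod_ne_zero
  intro h; rw [List.mem_map] at h
  obtain ⟨x, _, hx⟩ := h
  exact fact_ne_zero' x hx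

lemma alt_choose_sum_zero {n : ℕ} (hn : n ≠ 0) :
    ∑ i ∈ Finset.range (n + 1), (-1 : ℝ) ^ i * (Nat.choose n i : ℝ) = 0 := by
  have := Int.alternating_sum_range_choose_of_ne hn
  exact_mod_cast congrArg (fun z : ℤ => (z : ℝ)) this

end AltCompAux

open AltCompAux

/-- For every integer `k ≥ 3`,
`S_k = Σ_{j=1}^{k} ((-1)^{j-1}/j) · Σ_{k_1+⋯+k_j=k, k_i ≥ 1}
  k!·(k_1(k_1−1)+⋯+k_j(k_j−1))/(k_1!⋯k_j!) = 0`.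
The inner sum over ordered compositions of `k` into `j` positive parts is realized as a
sum over `Composition k`, where `c.length` plays the role of `j`. -/
theorem alternating_composition_sum_second_deriv (k : ℕ) (hk : 3 ≤ k) :
    ∑ c : Composition k,
      ((-1 : ℝ) ^ (c.length - 1) / (c.length : ℝ)) *
        ((Nat.factorial k : ℝ) *
            (∑ i : Fin c.length, (c.blocksFun i : ℝ) * ((c.blocksFun i : ℝ) - 1)) /
          ∏ i : Fin c.length, (Nat.factorial (c.blocksFun i) : ℝ)) = 0 := by
  classical
  obtain ⟨K, rfl⟩ : ∃ K, k = K + 1 := ⟨k - 1, by omega⟩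
  have hK : 2 ≤ K := by omega
  set q : ℕ → ℝ := fun x => (x : ℝ) * ((x : ℝ) - 1) with hq
  set w : Composition (K + 1) → ℝ := fun c =>
    (-1) ^ (c.length - 1) / (c.length : ℝ)
      * ((Nat.factorial (K + 1) : ℝ) / ∏ i : Fin c.length, (Nat.factorial (c.blocksFun i) : ℝ))
    with hw
  have hpos : ∀ c : Composition (K + 1), 0 < c.length :=
    fun c => c.length_pos_of_pos (Nat.succ_pos K)
  -- Step 0: rewrite each summand as a sum over block indices
  have h1 : ∀ c : Composition (K + 1),
      ((-1 : ℝ) ^ (c.length - 1) / (c.length : ℝ)) *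
        ((Nat.factorial (K + 1) : ℝ) *
            (∑ i : Fin c.length, (c.blocksFun i : ℝ) * ((c.blocksFun i : ℝ) - 1)) /
          ∏ i : Fin c.length, (Nat.factorial (c.blocksFun i) : ℝ))
        = ∑ i : Fin c.length, w c * q (c.blocksFun i) := by
    intro c
    rw [← Finset.mul_sum]
    simp only [hw, hq]
    ring
  rw [Finset.sum_congr rfl (fun c _ => h1 c)]
  -- Step 1: symmetrize using the rotation bijection
  rw [Finset.sum_sigma' Finset.univ (fun _ => Finset.univ)
      (fun c (i : Fin c.length) => w c * q (c.blocksFun i)),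
    Finset.univ_sigma_univ]
  have hwrot : ∀ (c : Composition (K + 1)) (i : ℕ), w (rotC c i) = w c := by
    intro c i
    simp only [hw, rotC_length, prod_fact_eq, rotC_blocks]
    rw [List.Perm.prod_eq (List.Perm.map _ (List.rotate_perm c.blocks i))]
  have hstep : ∀ x : (Σ c : Composition (K + 1), Fin c.length),
      w x.1 * q (x.1.blocksFun x.2)
        = w ((rotEquiv (K + 1) x).1) * q ((rotEquiv (K + 1) x).1.blocksFun
            ⟨0, hpos (rotEquiv (K + 1) x).1⟩) := by
    rintro ⟨c, i⟩
    show w c * q (c.blocksFun i) = w (rotC c i) * q ((rotC c i).blocksFun ⟨0, hpos _⟩)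
    rw [hwrot, blocksFun_rot]
  rw [Fintype.sum_congr _ _ hstep,
    Equiv.sum_comp (rotEquiv (K + 1))
      (fun x : (Σ c : Composition (K + 1), Fin c.length) =>
        w x.1 * q (x.1.blocksFun ⟨0, hpos x.1⟩)),
    ← Finset.univ_sigma_univ, Finset.sum_sigma]
  -- Step 2: evaluate the inner (constant) sum
  set G : List ℕ → ℝ := fun l =>
    (-1) ^ (l.length - 1) * ((Nat.factorial (K + 1) : ℝ) * q l.head!)
      / (l.map fun x => (Nat.factorial x : ℝ)).prod with hG
  have hc : ∀ c : Composition (K + 1),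
      ∑ _i : Fin c.length, w c * q (c.blocksFun ⟨0, hpos c⟩) = G c.blocks := by
    intro c
    rw [Finset.sum_const, Finset.card_univ, Fintype.card_fin, nsmul_eq_mul]
    have hl : (c.length : ℝ) ≠ 0 := Nat.cast_ne_zero.2 (hpos c).ne'
    have hh : c.blocksFun ⟨0, hpos c⟩ = c.blocks.head! := get_zero_eq_head! _ _
    have hpr : ∏ i : Fin c.length, (Nat.factorial (c.blocksFun i) : ℝ)
        = (c.blocks.map fun x => (Nat.factorial x : ℝ)).prod := prod_fact_eq c
    simp only [hw, hG, hh, hpr]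
    have hlen : c.blocks.length = c.length := rfl
    have hpr2 := prod_map_fact_ne_zero c.blocks
    rw [hlen]
    field_simp
  rw [Finset.sum_congr rfl (fun c _ => hc c), sum_composition_succ K G]
  -- Step 3: evaluate the inner sums via E
  have hinner : ∀ m ∈ Finset.range (K + 1),
      ∑ c : Composition (K - m), G ((m + 1) :: c.blocks)
        = ((Nat.factorial (K + 1) : ℝ) * q (m + 1) / (Nat.factorial (m + 1) : ℝ))
            * ((-1) ^ (K - m) / (Nat.factorial (K - m) : ℝ)) := by
    intro m _
    have hGc : ∀ l : List ℕ, G ((m + 1) :: l)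
        = ((Nat.factorial (K + 1) : ℝ) * q (m + 1) / (Nat.factorial (m + 1) : ℝ)) * wt l := by
      intro l
      simp only [hG, wt, List.map_cons, List.prod_cons, List.length_cons,
        Nat.add_sub_cancel, List.head!]
      have h1 := fact_ne_zero' (m + 1)
      have h2 := prod_map_fact_ne_zero l
      field_simp
    rw [Finset.sum_congr rfl (fun c _ => hGc c.blocks), ← Finset.mul_sum, ← E, E_eq]
  rw [Finset.sum_congr rfl hinner]
  -- Step 4: the final binomial computation
  rw [Finset.sum_range_succ' _ K]
  have hz : (Nat.factorial (K + 1) : ℝ) * q (0 + 1) / (Nat.factorial (0 + 1) : ℝ)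
      * ((-1) ^ (K - 0) / (Nat.factorial (K - 0) : ℝ)) = 0 := by
    simp [hq]
  rw [hz, add_zero]
  have hterm : ∀ i ∈ Finset.range K,
      (Nat.factorial (K + 1) : ℝ) * q (i + 1 + 1) / (Nat.factorial (i + 1 + 1) : ℝ)
          * ((-1) ^ (K - (i + 1)) / (Nat.factorial (K - (i + 1)) : ℝ))
        = (((K : ℝ) + 1) * K * (-1) ^ (K - 1))
            * ((-1) ^ i * (Nat.choose (K - 1) i : ℝ)) := by
    intro i hi
    rw [Finset.mem_range] at hi
    have hiK : i ≤ K - 1 := by omega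
    have hsub : K - (i + 1) = K - 1 - i := by omega
    rw [hsub, sign_sub hiK]
    have hch : ((K - 1).choose i : ℝ) * (Nat.factorial i : ℝ) * (Nat.factorial (K - 1 - i) : ℝ)
        = (Nat.factorial (K - 1) : ℝ) := by
      exact_mod_cast Nat.choose_mul_factorial_mul_factorial hiK
    have hfK : (Nat.factorial (K + 1) : ℝ)
        = ((K : ℝ) + 1) * K * (Nat.factorial (K - 1) : ℝ) := by
      have h3 : K - 1 + 1 = K := by omega
      have : Nat.factorial (K + 1) = (K + 1) * K * Nat.factorial (K - 1) := by
        calc Nat.factorial (K + 1) = (K + 1) * Nat.factorial K := Nat.factorial_succ K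
          _ = (K + 1) * ((K - 1 + 1) * Nat.factorial (K - 1)) := by
              rw [← Nat.factorial_succ (K - 1), h3]
          _ = (K + 1) * K * Nat.factorial (K - 1) := by rw [h3]; ring
      exact_mod_cast this
    have hfi : (Nat.factorial (i + 1 + 1) : ℝ)
        = ((i : ℝ) + 2) * ((i : ℝ) + 1) * (Nat.factorial i : ℝ) := by
      have : Nat.factorial (i + 2) = (i + 2) * ((i + 1) * Nat.factorial i) := by
        rw [Nat.factorial_succ, Nat.factorial_succ]
      rw [show i + 1 + 1 = i + 2 from rfl]
      push_cast [this]
      ring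
    have hq2 : q (i + 1 + 1) = ((i : ℝ) + 2) * ((i : ℝ) + 1) := by
      simp only [hq]
      push_cast
      ring
    rw [hq2, hfK, hfi]
    have h1 := fact_ne_zero' i
    have h2 := fact_ne_zero' (K - 1 - i)
    have h4 := fact_ne_zero' (K - 1)
    field_simp
    linear_combination (-1 : ℝ) * hch
  rw [Finset.sum_congr rfl hterm, ← Finset.mul_sum]
  have hK1 : K - 1 + 1 = K := by omega
  have hS : ∑ i ∈ Finset.range K, (-1 : ℝ) ^ i * (Nat.choose (K - 1) i : ℝ) = 0 := by
    rw [← hK1]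
    exact alt_choose_sum_zero (by omega)
  rw [hS, mul_zero]
end

section
/- Let f : ℂ → ℝ and for k ≥ 1 define G_k(z_1,…,z_k) = Σ_{j=1}^k ((-1)^{j-1}/j) Σ_{k_1+⋯+k_j=k, k_i≥1} (k!/(k_1!⋯k_j!)) Π_{l=1}^j f(z_l)^{k_l}. Then for all k ≥ 2 and all z_0 ∈ ℂ, G_k(z_0,…,z_0) = 0. -/
open scoped BigOperators

open FormalMultilinearSeries

noncomputable section CumulantAux

/-- Coefficients of `exp x - 1`. -/
private def cexpm1 : ℕ → ℝ := fun n => if n = 0 then 0 else ((n.factorial : ℝ))⁻¹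

/-- Coefficients of `log (1 + y)`. -/
private def clog1p : ℕ → ℝ := fun n => if n = 0 then 0 else (-1 : ℝ) ^ (n - 1) / n

private def pE : FormalMultilinearSeries ℝ ℝ ℝ := ofScalars ℝ cexpm1
private def qL : FormalMultilinearSeries ℝ ℝ ℝ := ofScalars ℝ clog1p

private lemma pE_radius_pos : 0 < pE.radius := by
  refine lt_of_lt_of_le (by norm_num) (pE.le_radius_of_bound 1 (r := 1) ?_)
  intro n
  have h1 : ‖pE n‖ = ‖cexpm1 n‖ := ofScalars_norm ℝ cexpm1 n
  rw [h1]
  have : |cexpm1 n| ≤ 1 := by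
    rcases n with _ | n
    · simp [cexpm1]
    · simp only [cexpm1, if_neg (Nat.succ_ne_zero n)]
      rw [abs_of_nonneg (by positivity)]
      rw [inv_le_one_iff₀]
      right
      exact_mod_cast Nat.one_le_iff_ne_zero.mpr (Nat.factorial_ne_zero _)
  simpa using this

private lemma qL_radius_pos : 0 < qL.radius := by
  refine lt_of_lt_of_le (by norm_num) (qL.le_radius_of_bound 1 (r := 1) ?_)
  intro n
  have h1 : ‖qL n‖ = ‖clog1p n‖ := ofScalars_norm ℝ clog1p n
  rw [h1]
  have : |clog1p n| ≤ 1 := by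
    rcases n with _ | n
    · simp [clog1p]
    · simp only [clog1p, if_neg (Nat.succ_ne_zero n)]
      rw [abs_div, abs_pow, abs_neg, abs_one, one_pow]
      rw [div_le_one (by positivity)]
      rw [Nat.abs_cast]
      exact_mod_cast Nat.succ_le_succ (Nat.zero_le n)
  simpa using this

private lemma pE_hasSum (x : ℝ) :
    HasSum (fun n => cexpm1 n • x ^ n) (Real.exp x - 1) := by
  have h1 : HasSum (fun n : ℕ => x ^ n / n.factorial) (Real.exp x) := by
    rw [Real.exp_eq_exp_ℝ]
    exact NormedSpace.expSeries_div_hasSum_exp x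
  have h2 : HasSum (fun n : ℕ => if n = 0 then (1 : ℝ) else 0) 1 := hasSum_ite_eq 0 1
  have h3 := h1.sub h2
  refine h3.congr_fun fun n => ?_
  rcases n with _ | n
  · simp [cexpm1]
  · simp [cexpm1, div_eq_inv_mul, mul_comm]

private lemma hasFPowerSeriesAt_expm1 :
    HasFPowerSeriesAt (fun x => Real.exp x - 1) pE 0 := by
  have h := (pE.hasFPowerSeriesOnBall pE_radius_pos).hasFPowerSeriesAt
  have hsum : pE.sum = fun x => Real.exp x - 1 := by
    funext x
    have e1 : pE.sum x = ∑' n, cexpm1 n • x ^ n := by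
      simp only [pE, FormalMultilinearSeries.sum]
      exact tsum_congr fun n => ofScalars_apply_eq cexpm1 x n
    rw [e1]
    exact (pE_hasSum x).tsum_eq
  rwa [hsum] at h

private lemma qL_hasSum {y : ℝ} (hy : |y| < 1) :
    HasSum (fun n => clog1p n • y ^ n) (Real.log (1 + y)) := by
  have h := Real.hasSum_pow_div_log_of_abs_lt_one (x := -y) (by rwa [abs_neg])
  have h2 := h.neg
  rw [sub_neg_eq_add, neg_neg] at h2
  have h3 : HasSum (fun n => clog1p (n + 1) • y ^ (n + 1)) (Real.log (1 + y)) := by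
    refine h2.congr_fun fun n => ?_
    simp only [clog1p, if_neg (Nat.succ_ne_zero n), Nat.add_sub_cancel, Nat.cast_add,
      Nat.cast_one, smul_eq_mul]
    rw [neg_pow, pow_succ]
    ring
  refine (hasSum_nat_add_iff' (f := fun n => clog1p n • y ^ n) 1).mp ?_
  simpa [clog1p] using h3

private lemma hasFPowerSeriesAt_log1p :
    HasFPowerSeriesAt (fun y => Real.log (1 + y)) qL 0 := by
  have h := (qL.hasFPowerSeriesOnBall qL_radius_pos).hasFPowerSeriesAt
  refine h.congr ?_
  have hball : ∀ᶠ y in nhds (0 : ℝ), |y| < 1 := by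
    have := Metric.ball_mem_nhds (0 : ℝ) one_pos
    filter_upwards [this] with y hy
    simpa [Real.dist_eq] using hy
  filter_upwards [hball] with y hy
  show qL.sum y = Real.log (1 + y)
  have e1 : qL.sum y = ∑' n, clog1p n • y ^ n := by
    simp only [qL, FormalMultilinearSeries.sum]
    exact tsum_congr fun n => ofScalars_apply_eq clog1p y n
  rw [e1]
  exact (qL_hasSum hy).tsum_eq

private lemma comp_eq_id_series :
    qL.comp pE = (ContinuousLinearMap.id ℝ ℝ).fpowerSeries 0 := by
  have hf := hasFPowerSeriesAt_expm1
  have hg : HasFPowerSeriesAt (fun y => Real.log (1 + y)) qL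
      ((fun x => Real.exp x - 1) 0) := by
    have h0 : ((fun x => Real.exp x - 1) 0) = (0 : ℝ) := by simp
    rw [h0]
    exact hasFPowerSeriesAt_log1p
  have h := HasFPowerSeriesAt.comp (f := fun x => Real.exp x - 1) (x := (0:ℝ)) hg hf
  have hid := (ContinuousLinearMap.id ℝ ℝ).hasFPowerSeriesAt (0 : ℝ)
  refine h.eq_formalMultilinearSeries_of_eventually hid ?_
  filter_upwards with x
  show Real.log (1 + (Real.exp x - 1)) = _
  rw [add_sub_cancel, Real.log_exp]
  simp

private lemma comp_apply_one (k : ℕ) :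
    (qL.comp pE) k (fun _ => (1 : ℝ)) =
      ∑ c : Composition k,
        clog1p c.length * ∏ i : Fin c.length, cexpm1 (c.blocksFun i) := by
  rw [FormalMultilinearSeries.comp]
  rw [ContinuousMultilinearMap.sum_apply]
  refine Finset.sum_congr rfl fun c _ => ?_
  rw [FormalMultilinearSeries.compAlongComposition_apply]
  have happ : pE.applyComposition c (fun _ => (1 : ℝ)) =
      fun i => cexpm1 (c.blocksFun i) := by
    funext i
    show pE (c.blocksFun i) ((fun _ => (1 : ℝ)) ∘ _) = _
    have e : ((fun _ => (1 : ℝ)) ∘ (c.embedding i)) = fun _ => (1 : ℝ) := rfl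
    rw [e]
    simp only [pE]
    rw [ofScalars_apply_eq]
    simp
  rw [happ]
  simp only [qL, FormalMultilinearSeries.ofScalars]
  simp [ContinuousMultilinearMap.mkPiAlgebraFin_apply, List.prod_ofFn, smul_eq_mul]

private lemma key_sum_eq_zero (k : ℕ) (hk : 2 ≤ k) :
    ∑ c : Composition k,
      clog1p c.length * ∏ i : Fin c.length, cexpm1 (c.blocksFun i) = 0 := by
  rw [← comp_apply_one, comp_eq_id_series]
  obtain ⟨m, rfl⟩ : ∃ m, k = m + 2 := ⟨k - 2, by omega⟩
  rw [ContinuousLinearMap.fpowerSeries_apply_add_two]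
  simp

end CumulantAux

/-- The cumulant polynomial
`G_k(z_1,…,z_k) = Σ_{j=1}^k ((-1)^{j-1}/j) Σ_{k_1+⋯+k_j=k, k_i≥1}
  (k!/(k_1!⋯k_j!)) Π_{l=1}^j f(z_l)^{k_l}`,
realized as a sum over `Composition k` (with `c.length` playing the role of `j`). -/
noncomputable def cumulantG (f : ℂ → ℝ) (k : ℕ) (z : Fin k → ℂ) : ℝ :=
  ∑ c : Composition k,
    ((-1 : ℝ) ^ (c.length - 1) / (c.length : ℝ)) *
      ((Nat.factorial k : ℝ) /
        ∏ i : Fin c.length, (Nat.factorial (c.blocksFun i) : ℝ)) *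
      ∏ i : Fin c.length, f (z (Fin.castLE c.length_le i)) ^ (c.blocksFun i)

/-- for all `k ≥ 2` and `z_0 ∈ ℂ`, `G_k(z_0,…,z_0) = 0`. -/
theorem cumulantG_diag_eq_zero (f : ℂ → ℝ) (k : ℕ) (hk : 2 ≤ k) (z0 : ℂ) :
    cumulantG f k (fun _ => z0) = 0 := by
  have hk0 : 0 < k := by omega
  have key := key_sum_eq_zero k hk
  rw [cumulantG]
  have h1 : ∀ c : Composition k,
      ((-1 : ℝ) ^ (c.length - 1) / (c.length : ℝ)) *
        ((Nat.factorial k : ℝ) /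
          ∏ i : Fin c.length, (Nat.factorial (c.blocksFun i) : ℝ)) *
        ∏ i : Fin c.length, f z0 ^ (c.blocksFun i)
      = ((Nat.factorial k : ℝ) * f z0 ^ k) *
          (clog1p c.length * ∏ i : Fin c.length, cexpm1 (c.blocksFun i)) := by
    intro c
    have hlen : c.length ≠ 0 := (c.length_pos_of_pos hk0).ne'
    have hprod : ∏ i : Fin c.length, f z0 ^ (c.blocksFun i) = f z0 ^ k := by
      rw [Finset.prod_pow_eq_pow_sum, c.sum_blocksFun]
    have hclog : clog1p c.length = (-1 : ℝ) ^ (c.length - 1) / (c.length : ℝ) := by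
      simp [clog1p, hlen]
    have hcexp : ∏ i : Fin c.length, cexpm1 (c.blocksFun i) =
        (∏ i : Fin c.length, (Nat.factorial (c.blocksFun i) : ℝ))⁻¹ := by
      rw [← Finset.prod_inv_distrib]
      refine Finset.prod_congr rfl fun i _ => ?_
      have hb : c.blocksFun i ≠ 0 := Nat.one_le_iff_ne_zero.mp (c.one_le_blocksFun i)
      simp [cexpm1, hb]
    rw [hprod, hclog, hcexp, div_eq_mul_inv]
    ring
  rw [Finset.sum_congr rfl fun c _ => h1 c, ← Finset.mul_sum, key, mul_zero]
end

section
/- Let f : ℂ → ℝ be C¹ and let G_k be the cumulant polynomial built from f. Then for k ≥ 3, every z_0 ∈ ℂ and each coordinate direction j ∈ {1,2}, the sum over r = 1,…,k of the partial derivative ∂G_k/∂z_r^{(j)} evaluated at the diagonal point (z_0,…,z_0) is zero. -/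
open scoped BigOperators

namespace CumulantAux

def comps : ℕ → Finset (List ℕ)
  | 0 => {([] : List ℕ)}
  | (n+1) => (Finset.range (n+1)).biUnion fun m =>
      (comps (n - m)).image (List.cons (m+1))
  decreasing_by exact Nat.lt_succ_of_le (Nat.sub_le n m)

theorem mem_comps : ∀ (n : ℕ) (l : List ℕ), l ∈ comps n ↔ l.sum = n ∧ ∀ b ∈ l, 0 < b := by
  intro n
  induction n using Nat.strong_induction_on with
  | _ n ih =>
    match n with
    | 0 =>
      intro l
      rw [comps]
      simp only [Finset.mem_singleton]
      constructor
      · rintro rfl; simp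
      · rintro ⟨hs, hp⟩
        cases l with
        | nil => rfl
        | cons b t =>
          exfalso
          have hb := hp b (by simp)
          simp only [List.sum_cons] at hs
          omega
    | (n+1) =>
      intro l
      rw [comps]
      simp only [Finset.mem_biUnion, Finset.mem_range, Finset.mem_image]
      constructor
      · rintro ⟨m, hm, l', hl', rfl⟩
        rw [ih (n - m) (Nat.lt_succ_of_le (Nat.sub_le n m))] at hl'
        obtain ⟨hs, hp⟩ := hl'
        constructor
        · simp only [List.sum_cons, hs]; omega
        · intro b hb
          rcases List.mem_cons.1 hb with rfl | hb
          · omega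
          · exact hp b hb
      · rintro ⟨hs, hp⟩
        cases l with
        | nil => simp at hs
        | cons b t =>
          have hb := hp b (by simp)
          simp only [List.sum_cons] at hs
          refine ⟨b - 1, by omega, t, ?_, by congr 1; omega⟩
          rw [ih (n - (b-1)) (Nat.lt_succ_of_le (Nat.sub_le n (b-1)))]
          exact ⟨by omega, fun x hx => hp x (by simp [hx])⟩

theorem sum_comps_succ (F : List ℕ → ℝ) (n : ℕ) :
    ∑ l ∈ comps (n+1), F l
      = ∑ m ∈ Finset.range (n+1), ∑ l ∈ comps (n - m), F ((m+1) :: l) := by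
  rw [comps]
  rw [Finset.sum_biUnion]
  · refine Finset.sum_congr rfl fun m _ => ?_
    rw [Finset.sum_image]
    intro x _ y _ h
    simpa using h
  · intro a _ b _ hab
    apply Finset.disjoint_left.2
    rintro l hl hl'
    simp only [Finset.mem_image] at hl hl'
    obtain ⟨x, _, rfl⟩ := hl
    obtain ⟨y, _, h⟩ := hl'
    apply hab
    have := (List.cons.injEq _ _ _ _ ▸ h).1
    omega

theorem alt_sum (n : ℕ) :
    ∑ m ∈ Finset.range (n+1), (-1:ℝ)^m * ((n+1).choose (m+1)) = 1 := by
  have h := Int.alternating_sum_range_choose_of_ne (n := n+1) (by omega)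
  rw [Finset.sum_range_succ'] at h
  have h' : (∑ m ∈ Finset.range (n+1), (-1:ℤ)^(m+1) * ((n+1).choose (m+1))) + 1 = 0 := by
    simpa using h
  have h2 : (∑ m ∈ Finset.range (n+1), (-1:ℤ)^m * ((n+1).choose (m+1))) = 1 := by
    have : ∀ m, (-1:ℤ)^(m+1) * ((n+1).choose (m+1)) = -((-1)^m * ((n+1).choose (m+1))) := by
      intro m; ring
    rw [Finset.sum_congr rfl fun m _ => this m, Finset.sum_neg_distrib] at h'
    omega
  calc ∑ m ∈ Finset.range (n+1), (-1:ℝ)^m * ((n+1).choose (m+1))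
      = ((∑ m ∈ Finset.range (n+1), (-1:ℤ)^m * ((n+1).choose (m+1)) : ℤ) : ℝ) := by
        push_cast; rfl
    _ = 1 := by rw [h2]; norm_num

theorem alt_sum' (n : ℕ) (hn : n ≠ 0) :
    ∑ m ∈ Finset.range (n+1), (-1:ℝ)^m * (n.choose m) = 0 := by
  have h := Int.alternating_sum_range_choose_of_ne (n := n) hn
  calc ∑ m ∈ Finset.range (n+1), (-1:ℝ)^m * (n.choose m)
      = ((∑ m ∈ Finset.range (n+1), (-1:ℤ)^m * (n.choose m) : ℤ) : ℝ) := by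
        push_cast; rfl
    _ = 0 := by rw [h]; norm_num

theorem choose_div (n m : ℕ) (hm : m ≤ n) :
    ((m.factorial : ℝ))⁻¹ * (((n - m).factorial : ℝ))⁻¹
      = (n.choose m : ℝ) / ((n.factorial : ℝ)) := by
  have h := Nat.choose_mul_factorial_mul_factorial hm
  have := congrArg (fun x : ℕ => (x : ℝ)) h
  push_cast at this
  have h1 : ((m.factorial : ℝ)) ≠ 0 := by exact_mod_cast Nat.factorial_ne_zero m
  have h2 : (((n-m).factorial : ℝ)) ≠ 0 := by exact_mod_cast Nat.factorial_ne_zero (n-m)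
  have h3 : ((n.factorial : ℝ)) ≠ 0 := by exact_mod_cast Nat.factorial_ne_zero n
  field_simp
  linarith [this]

theorem neg_one_pow_sub {m n : ℕ} (hm : m ≤ n) :
    (-1:ℝ)^(n-m) = (-1)^n * (-1)^m := by
  have h : (-1:ℝ)^(n-m) * (-1)^m = (-1)^n := by
    rw [← pow_add]; congr 1; omega
  have h2 : ((-1:ℝ)^m) * ((-1)^m) = 1 := by
    rw [← pow_add, ← two_mul, pow_mul]; norm_num
  calc (-1:ℝ)^(n-m) = (-1:ℝ)^(n-m) * (((-1:ℝ)^m) * ((-1)^m)) := by rw [h2, mul_one]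
    _ = ((-1:ℝ)^(n-m) * (-1)^m) * (-1)^m := by ring
    _ = (-1)^n * (-1)^m := by rw [h]

noncomputable def wt (l : List ℕ) : ℝ := (l.map fun b => ((b.factorial : ℝ))⁻¹).prod

theorem wt_cons (b : ℕ) (l : List ℕ) : wt (b :: l) = ((b.factorial : ℝ))⁻¹ * wt l := by
  simp [wt]

theorem SA_eq : ∀ n : ℕ, ∑ l ∈ comps n, (-1:ℝ)^l.length * wt l
    = (-1)^n / (n.factorial : ℝ) := by
  intro n
  induction n using Nat.strong_induction_on with
  | _ n ih =>
    match n with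
    | 0 => rw [comps]; simp [wt]
    | (n+1) =>
      rw [sum_comps_succ]
      have step : ∀ m ∈ Finset.range (n+1),
          ∑ l ∈ comps (n - m), (-1:ℝ)^((m+1) :: l).length * wt ((m+1) :: l)
            = -((-1:ℝ)^n * (-1)^m * (((n+1).choose (m+1) : ℝ) / ((n+1).factorial : ℝ))) := by
        intro m hm
        have hmn : m ≤ n := by simp at hm; omega
        have : ∀ l : List ℕ, (-1:ℝ)^((m+1) :: l).length * wt ((m+1) :: l)
            = -((((m+1).factorial : ℝ))⁻¹ * ((-1:ℝ)^l.length * wt l)) := by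
          intro l
          rw [wt_cons, List.length_cons, pow_succ]
          ring
        rw [Finset.sum_congr rfl fun l _ => this l, Finset.sum_neg_distrib,
          ← Finset.mul_sum, ih (n - m) (Nat.lt_succ_of_le (Nat.sub_le n m))]
        have hc : (((m+1).factorial : ℝ))⁻¹ * (((n - m).factorial : ℝ))⁻¹
            = ((n+1).choose (m+1) : ℝ) / (((n+1).factorial : ℝ)) := by
          have := choose_div (n+1) (m+1) (by omega)
          have he : n + 1 - (m + 1) = n - m := by omega
          rwa [he] at this
        rw [neg_one_pow_sub hmn]
        rw [neg_inj]
        calc (((m+1).factorial : ℝ))⁻¹ * ((-1:ℝ)^n * (-1)^m / (((n - m).factorial : ℝ)))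
            = (-1:ℝ)^n * (-1)^m * ((((m+1).factorial : ℝ))⁻¹ * (((n - m).factorial : ℝ))⁻¹) := by
              rw [div_eq_mul_inv]; ring
          _ = (-1:ℝ)^n * (-1)^m * (((n+1).choose (m+1) : ℝ) / ((n+1).factorial : ℝ)) := by
              rw [hc]
      rw [Finset.sum_congr rfl step, Finset.sum_neg_distrib]
      have : ∑ m ∈ Finset.range (n+1),
          (-1:ℝ)^n * (-1)^m * (((n+1).choose (m+1) : ℝ) / ((n+1).factorial : ℝ))
          = (-1:ℝ)^n / ((n+1).factorial : ℝ) := by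
        have : ∀ m ∈ Finset.range (n+1), (-1:ℝ)^n * (-1)^m * (((n+1).choose (m+1) : ℝ) / ((n+1).factorial : ℝ))
            = ((-1:ℝ)^n / ((n+1).factorial : ℝ)) * ((-1:ℝ)^m * ((n+1).choose (m+1) : ℝ)) := by
          intro m _; ring
        rw [Finset.sum_congr rfl this, ← Finset.mul_sum, alt_sum, mul_one]
      rw [this]
      rw [pow_succ]
      ring

end CumulantAux

namespace CumulantAux

theorem SB_eq (n : ℕ) (hn : 2 ≤ n) :
    ∑ l ∈ comps n, (-1:ℝ)^l.length * wt l * (l.headI : ℝ) = 0 := by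
  obtain ⟨n', rfl⟩ : ∃ n', n = n' + 1 := ⟨n - 1, by omega⟩
  have hn' : n' ≠ 0 := by omega
  rw [sum_comps_succ (fun l => (-1:ℝ)^l.length * wt l * (l.headI : ℝ))]
  have step : ∀ m ∈ Finset.range (n'+1),
      ∑ l ∈ comps (n' - m), (-1:ℝ)^((m+1) :: l).length * wt ((m+1) :: l) * (((m+1) :: l).headI : ℝ)
        = -(((-1:ℝ)^n' / ((n'.factorial : ℝ))) * ((-1:ℝ)^m * (n'.choose m : ℝ))) := by
    intro m hm
    have hmn : m ≤ n' := by simp at hm; omega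
    have key : ∀ l : List ℕ, (-1:ℝ)^((m+1) :: l).length * wt ((m+1) :: l) * (((m+1) :: l).headI : ℝ)
        = -(((m+1:ℝ)) * (((m+1).factorial : ℝ))⁻¹ * ((-1:ℝ)^l.length * wt l)) := by
      intro l
      rw [wt_cons, List.length_cons, pow_succ]
      simp only [List.headI]
      push_cast
      ring
    rw [Finset.sum_congr rfl fun l _ => key l, Finset.sum_neg_distrib, ← Finset.mul_sum,
      SA_eq]
    have hf : ((m+1:ℝ)) * (((m+1).factorial : ℝ))⁻¹ = ((m.factorial : ℝ))⁻¹ := by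
      rw [Nat.factorial_succ]
      push_cast
      rw [mul_inv]
      have : ((m:ℝ)+1) ≠ 0 := by positivity
      field_simp
    rw [hf, neg_one_pow_sub hmn, neg_inj]
    calc ((m.factorial : ℝ))⁻¹ * ((-1:ℝ)^n' * (-1)^m / ((n'-m).factorial : ℝ))
        = (-1:ℝ)^n' * (-1)^m * (((m.factorial : ℝ))⁻¹ * (((n'-m).factorial : ℝ))⁻¹) := by
          rw [div_eq_mul_inv]; ring
      _ = (-1:ℝ)^n' * (-1)^m * ((n'.choose m : ℝ) / ((n'.factorial : ℝ))) := by
          rw [choose_div n' m hmn]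
      _ = ((-1:ℝ)^n' / ((n'.factorial : ℝ))) * ((-1:ℝ)^m * (n'.choose m : ℝ)) := by ring
  rw [Finset.sum_congr rfl step, Finset.sum_neg_distrib, ← Finset.mul_sum, alt_sum' n' hn']
  simp

theorem headI_eq_getD (l : List ℕ) : l.headI = l.getD 0 0 := by
  cases l <;> simp

theorem cast_sum_list (l : List ℕ) :
    (l.sum : ℝ) = ∑ i ∈ Finset.range l.length, ((l.getD i 0 : ℕ) : ℝ) := by
  induction l with
  | nil => simp
  | cons b t ih =>
    rw [List.sum_cons, List.length_cons, Finset.sum_range_succ']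
    push_cast [ih]
    simp [List.getD]
    ring

theorem wt_rotate (l : List ℕ) (i : ℕ) : wt (l.rotate i) = wt l := by
  unfold wt
  exact List.Perm.prod_eq ((List.rotate_perm l i).map _)

theorem rotate_mem_comps {n : ℕ} {l : List ℕ} (hl : l ∈ comps n) (i : ℕ) :
    l.rotate i ∈ comps n := by
  rw [mem_comps] at hl ⊢
  exact ⟨by rw [(List.rotate_perm l i).sum_eq]; exact hl.1,
    fun b hb => hl.2 b ((List.rotate_perm l i).mem_iff.1 hb)⟩

theorem SC (n : ℕ) (hn : 1 ≤ n) :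
    (n:ℝ) * ∑ l ∈ comps n, (-1:ℝ)^l.length / (l.length:ℝ) * wt l
      = ∑ l ∈ comps n, (-1:ℝ)^l.length * wt l * (l.headI : ℝ) := by
  have hlen : ∀ l ∈ comps n, 0 < l.length := by
    intro l hl
    rw [mem_comps] at hl
    rcases l with _ | ⟨b, t⟩
    · exfalso; have := hl.1; simp at this; omega
    · simp
  rw [Finset.mul_sum]
  have lhs_eq : ∀ l ∈ comps n,
      (n:ℝ) * ((-1:ℝ)^l.length / (l.length:ℝ) * wt l)
        = ∑ i ∈ Finset.range l.length,
            (-1:ℝ)^l.length / (l.length:ℝ) * wt l * ((l.getD i 0 : ℕ) : ℝ) := by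
    intro l hl
    rw [← Finset.mul_sum, ← cast_sum_list, (mem_comps n l).1 hl |>.1]
    ring
  rw [Finset.sum_congr rfl lhs_eq]
  have rhs_eq : ∀ l ∈ comps n,
      (-1:ℝ)^l.length * wt l * (l.headI : ℝ)
        = ∑ i ∈ Finset.range l.length,
            (-1:ℝ)^l.length / (l.length:ℝ) * wt l * (l.headI : ℝ) := by
    intro l hl
    rw [Finset.sum_const, Finset.card_range, nsmul_eq_mul]
    have h0 : ((l.length : ℝ)) ≠ 0 := by
      have := hlen l hl; positivity
    field_simp
  rw [Finset.sum_congr rfl rhs_eq]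
  rw [Finset.sum_sigma' (comps n) (fun l => Finset.range l.length)
    (fun l i => (-1:ℝ)^l.length / (l.length:ℝ) * wt l * ((l.getD i 0 : ℕ) : ℝ))]
  rw [Finset.sum_sigma' (comps n) (fun l => Finset.range l.length)
    (fun l i => (-1:ℝ)^l.length / (l.length:ℝ) * wt l * (l.headI : ℝ))]
  refine Finset.sum_nbij' (fun p => ⟨p.1.rotate p.2, p.2⟩)
    (fun p => ⟨p.1.rotate (p.1.length - p.2), p.2⟩) ?_ ?_ ?_ ?_ ?_
  · rintro ⟨l, i⟩ hp
    rw [Finset.mem_sigma] at hp ⊢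
    exact ⟨rotate_mem_comps hp.1 i, by simpa using hp.2⟩
  · rintro ⟨l, i⟩ hp
    rw [Finset.mem_sigma] at hp ⊢
    exact ⟨rotate_mem_comps hp.1 _, by simpa using hp.2⟩
  · rintro ⟨l, i⟩ hp
    rw [Finset.mem_sigma] at hp
    have hi : i < l.length := by simpa using hp.2
    simp only [Sigma.mk.inj_iff, heq_eq_eq]
    constructor
    · rw [List.rotate_rotate, List.length_rotate]
      have : i + (l.length - i) = l.length := by omega
      rw [this, List.rotate_length]
    · trivial
  · rintro ⟨l, i⟩ hp
    rw [Finset.mem_sigma] at hp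
    have hi : i < l.length := by simpa using hp.2
    simp only [Sigma.mk.inj_iff, heq_eq_eq]
    constructor
    · rw [List.rotate_rotate]
      have : l.length - i + i = l.length := by omega
      rw [this, List.rotate_length]
    · trivial
  · rintro ⟨l, i⟩ hp
    rw [Finset.mem_sigma] at hp
    have hi : i < l.length := by simpa using hp.2
    simp only
    rw [List.length_rotate, wt_rotate]
    congr 2
    rw [headI_eq_getD]
    have h0 : 0 < (l.rotate i).length := by rw [List.length_rotate]; omega
    rw [List.getD_eq_getElem _ _ (by omega : i < l.length),
      List.getD_eq_getElem _ _ h0, List.getElem_rotate]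
    congr 1
    simp [Nat.mod_eq_of_lt hi]

end CumulantAux

namespace CumulantAux

theorem key_sum (k : ℕ) (hk : 2 ≤ k) :
    ∑ l ∈ comps k, (-1:ℝ)^(l.length - 1) / (l.length:ℝ) * wt l = 0 := by
  have hlen : ∀ l ∈ comps k, 0 < l.length := by
    intro l hl
    rw [mem_comps] at hl
    rcases l with _ | ⟨b, t⟩
    · exfalso; have := hl.1; simp at this; omega
    · simp
  have h1 : ∀ l ∈ comps k, (-1:ℝ)^(l.length - 1) / (l.length:ℝ) * wt l
      = -((-1:ℝ)^l.length / (l.length:ℝ) * wt l) := by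
    intro l hl
    have := hlen l hl
    have hp : (-1:ℝ)^l.length = -(-1:ℝ)^(l.length - 1) := by
      conv_lhs => rw [show l.length = (l.length - 1) + 1 by omega]
      rw [pow_succ]; ring
    rw [hp]; ring
  rw [Finset.sum_congr rfl h1, Finset.sum_neg_distrib, neg_eq_zero]
  have h2 := SC k (by omega)
  rw [SB_eq k hk] at h2
  have hk0 : ((k:ℝ)) ≠ 0 := by positivity
  exact (mul_eq_zero.1 h2).resolve_left hk0

theorem sum_composition (n : ℕ) (F : List ℕ → ℝ) :
    ∑ c : Composition n, F c.blocks = ∑ l ∈ comps n, F l := by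
  apply Finset.sum_bij (fun (c : Composition n) _ => c.blocks)
  · intro c _
    rw [mem_comps]
    exact ⟨c.blocks_sum, fun b hb => c.blocks_pos hb⟩
  · intro c1 _ c2 _ h
    exact Composition.ext h
  · intro l hl
    rw [mem_comps] at hl
    exact ⟨⟨l, fun hi => hl.2 _ hi, hl.1⟩, Finset.mem_univ _, rfl⟩
  · intro c _; rfl

theorem wt_eq_inv_prod (l : List ℕ) :
    wt l = ((l.map fun b => ((b.factorial : ℝ))).prod)⁻¹ := by
  induction l with
  | nil => simp [wt]
  | cons b t ih => rw [wt_cons, ih, List.map_cons, List.prod_cons, mul_inv]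

theorem prod_blocksFun_eq (n : ℕ) (c : Composition n) (g : ℕ → ℝ) :
    ∏ i : Fin c.length, g (c.blocksFun i) = (c.blocks.map g).prod := by
  rw [← c.ofFn_blocksFun, List.map_ofFn, List.prod_ofFn]
  rfl

theorem comp_coeff_sum (k : ℕ) (hk : 2 ≤ k) :
    ∑ c : Composition k,
      ((-1 : ℝ) ^ (c.length - 1) / (c.length : ℝ)) *
        ((Nat.factorial k : ℝ) /
          ∏ i : Fin c.length, (Nat.factorial (c.blocksFun i) : ℝ)) = 0 := by
  have he : ∀ c : Composition k,
      ((-1 : ℝ) ^ (c.length - 1) / (c.length : ℝ)) *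
        ((Nat.factorial k : ℝ) /
          ∏ i : Fin c.length, (Nat.factorial (c.blocksFun i) : ℝ))
      = (Nat.factorial k : ℝ) *
          ((-1:ℝ)^(c.blocks.length - 1) / (c.blocks.length:ℝ) * wt c.blocks) := by
    intro c
    rw [prod_blocksFun_eq k c (fun b => ((b.factorial : ℝ)))]
    rw [wt_eq_inv_prod, Composition.blocks_length]
    rw [div_eq_mul_inv, div_eq_mul_inv]
    ring
  rw [Finset.sum_congr rfl fun c _ => he c]
  rw [← Finset.mul_sum]
  rw [sum_composition k (fun l => (-1:ℝ)^(l.length - 1) / (l.length:ℝ) * wt l)]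
  rw [key_sum k hk, mul_zero]

end CumulantAux


/-- The unit vector of `ℂ^k ≅ (ℝ²)^k` pointing in the `j`-th real coordinate direction
(`j = 0`: real part, `j = 1`: imaginary part) of the `r`-th variable.  Differentiating
along `coordDir k r j` is the partial derivative `∂_{r j}` with respect to the `j`-th
real coordinate of the `r`-th complex variable. -/
noncomputable def coordDir (k : ℕ) (r : Fin k) (j : Fin 2) : Fin k → ℂ :=
  Pi.single r (if j = 0 then (1 : ℂ) else Complex.I)

theorem cumulantG_diag (f : ℂ → ℝ) (k : ℕ) (hk : 2 ≤ k) (z : ℂ) :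
    cumulantG f k (fun _ => z) = 0 := by
  unfold cumulantG
  have hprod : ∀ c : Composition k,
      ∏ i : Fin c.length, f ((fun _ => z) (Fin.castLE c.length_le i)) ^ (c.blocksFun i)
        = f z ^ k := by
    intro c
    rw [Finset.prod_pow_eq_pow_sum, c.sum_blocksFun]
  rw [Finset.sum_congr rfl fun c _ => by rw [hprod c]]
  rw [← Finset.sum_mul, CumulantAux.comp_coeff_sum k hk, zero_mul]


/-- for `f` of class `C¹`, `k ≥ 3`, every `z_0 ∈ ℂ` and each real coordinate
direction `j`, `Σ_{r=1}^k (∂_{r j} G_k)(z_0,…,z_0) = 0`. -/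
theorem cumulantG_diag_first_deriv_sum (f : ℂ → ℝ) (hf : ContDiff ℝ 1 f)
    (k : ℕ) (hk : 3 ≤ k) (z0 : ℂ) (j : Fin 2) :
    ∑ r : Fin k,
      fderiv ℝ (cumulantG f k) (fun _ => z0) (coordDir k r j) = 0 := by
  classical
  have hfd : Differentiable ℝ f := hf.differentiable one_ne_zero
  have hG : Differentiable ℝ (cumulantG f k) := by
    unfold cumulantG
    apply Differentiable.fun_sum
    intro c _
    apply Differentiable.const_mul
    have : ∀ s : Finset (Fin c.length), Differentiable ℝ
        (fun y : Fin k → ℂ => ∏ i ∈ s, f (y (Fin.castLE c.length_le i)) ^ (c.blocksFun i)) := by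
      intro s
      induction s using Finset.induction with
      | empty => simp only [Finset.prod_empty]; exact differentiable_const (1:ℝ)
      | insert _ _ h ih =>
        simp_rw [Finset.prod_insert h]
        exact ((hfd.comp (ContinuousLinearMap.proj
          (Fin.castLE c.length_le _)).differentiable).pow _).mul ih
    exact this Finset.univ
  set D : ℂ →L[ℝ] (Fin k → ℂ) := ContinuousLinearMap.pi (fun _ => ContinuousLinearMap.id ℝ ℂ)
    with hD
  have hcomp : (fun z : ℂ => cumulantG f k (D z)) = fun _ => (0:ℝ) :=
    funext fun z => cumulantG_diag f k (by omega) z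
  have h1 : HasFDerivAt (fun z : ℂ => cumulantG f k (D z))
      ((fderiv ℝ (cumulantG f k) (fun _ => z0)).comp D) z0 := by
    have h2 := (hG (fun _ => z0)).hasFDerivAt
    exact HasFDerivAt.comp z0 h2 D.hasFDerivAt
  rw [hcomp] at h1
  have h2 : (fderiv ℝ (cumulantG f k) (fun _ => z0)).comp D = 0 :=
    h1.unique (hasFDerivAt_const 0 z0)
  set c : ℂ := if j = 0 then (1:ℂ) else Complex.I with hc
  have hsum : ∑ r : Fin k, coordDir k r j = fun _ => c := by
    unfold coordDir
    exact Finset.univ_sum_single (fun _ : Fin k => c)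
  calc ∑ r : Fin k, fderiv ℝ (cumulantG f k) (fun _ => z0) (coordDir k r j)
      = fderiv ℝ (cumulantG f k) (fun _ => z0) (∑ r : Fin k, coordDir k r j) :=
        (map_sum _ _ _).symm
    _ = ((fderiv ℝ (cumulantG f k) (fun _ => z0)).comp D) c := by rw [hsum]; rfl
    _ = 0 := by rw [h2]; rfl
end

section
/- Let f : ℂ → ℝ be C² and G_k the cumulant polynomial built from f. For k ≥ 3, z_0 ∈ ℂ and m, l ∈ {1,2}, the full second-derivative sum Σ_{1 ≤ r_1, r_2 ≤ k} (∂_{r_1 m}∂_{r_2 l} G_k)(z_0,…,z_0) = 0. -/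
open scoped BigOperators

section Aux
open PowerSeries Finset


private lemma coeff_pow_tuple {R : Type*} [CommSemiring R] (φ : PowerSeries R) (j n : ℕ) :
    PowerSeries.coeff n (φ ^ j) =
      ∑ b ∈ Finset.Nat.antidiagonalTuple j n, ∏ i, PowerSeries.coeff (b i) φ := by
  induction j generalizing n with
  | zero =>
    cases n with
    | zero => simp
    | succ n => simp [Finset.Nat.antidiagonalTuple_zero_succ, PowerSeries.coeff_one]
  | succ j ih =>
    rw [pow_succ', PowerSeries.coeff_mul]
    have : ∀ p : ℕ × ℕ, PowerSeries.coeff p.1 φ * PowerSeries.coeff p.2 (φ ^ j)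
        = ∑ b ∈ Finset.Nat.antidiagonalTuple j p.2, PowerSeries.coeff p.1 φ *
            ∏ i, PowerSeries.coeff (b i) φ := by
      intro p; rw [ih, Finset.mul_sum]
    rw [Finset.sum_congr rfl fun p _ => this p, Finset.sum_sigma']
    refine Finset.sum_bij' (i := fun x _ => Fin.cons x.1.1 x.2)
      (j := fun b _ => ⟨(b 0, ∑ i : Fin j, b i.succ), Fin.tail b⟩) ?_ ?_ ?_ ?_ ?_
    · rintro ⟨⟨a, m⟩, b⟩ hx
      simp only [Finset.mem_sigma, Finset.Nat.mem_antidiagonalTuple,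
        Finset.HasAntidiagonal.mem_antidiagonal] at hx ⊢
      rw [Fin.sum_univ_succ]
      simp [Fin.cons_zero, Fin.cons_succ, hx.2, hx.1]
    · intro b hb
      simp only [Finset.Nat.mem_antidiagonalTuple] at hb
      simp only [Finset.mem_sigma, Finset.HasAntidiagonal.mem_antidiagonal, Finset.Nat.mem_antidiagonalTuple]
      constructor
      · rw [← hb, Fin.sum_univ_succ]
      · rfl
    · rintro ⟨⟨a, m⟩, b⟩ hx
      simp only [Finset.mem_sigma, Finset.Nat.mem_antidiagonalTuple] at hx
      simp only [Fin.cons_zero, Fin.tail_cons]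
      congr 1
      exact Prod.ext rfl (by simp [Fin.cons_succ, hx.2])
    · intro b _
      simp [Fin.cons_self_tail]
    · rintro ⟨⟨a, m⟩, b⟩ hx
      rw [Fin.prod_univ_succ]
      simp [Fin.cons_zero, Fin.cons_succ]


private lemma ofFn_getD (L : List ℕ) {j : ℕ} (h : L.length = j) :
    (List.ofFn fun i : Fin j => L.getD i 0) = L := by
  subst h
  conv_rhs => rw [← List.ofFn_get L]
  refine congrArg _ (funext fun i => ?_)
  rw [List.getD_eq_getElem L 0 i.isLt]
  rfl

private lemma sum_getD (L : List ℕ) {j : ℕ} (h : L.length = j) :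
    ∑ i : Fin j, L.getD i 0 = L.sum := by
  conv_rhs => rw [← ofFn_getD L h]
  rw [List.sum_ofFn]

private lemma comp_sum (k : ℕ) (W : List ℕ → ℝ) :
    ∑ c : Composition k, W c.blocks =
      ∑ j ∈ Finset.range (k+1), ∑ b ∈ (Finset.Nat.antidiagonalTuple j k).filter
        (fun b => ∀ i, b i ≠ 0), W (List.ofFn b) := by
  rw [← Finset.sum_fiberwise_of_maps_to (g := fun c : Composition k => c.length)
      (t := Finset.range (k+1))
      (fun c _ => Finset.mem_range.2 (Nat.lt_succ_of_le c.length_le))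
      (fun c => W c.blocks)]
  refine Finset.sum_congr rfl fun j hj => ?_
  refine Finset.sum_bij'
    (i := fun c _ => fun i : Fin j => c.blocks.getD i 0)
    (j := fun b hb =>
      (⟨List.ofFn b, by
          intro x hx
          rw [List.mem_ofFn] at hx
          obtain ⟨i, rfl⟩ := hx
          have := (Finset.mem_filter.1 hb).2 i
          omega, by
          rw [List.sum_ofFn]
          exact Finset.Nat.mem_antidiagonalTuple.1 (Finset.mem_filter.1 hb).1⟩ : Composition k))
    ?_ ?_ ?_ ?_ ?_
  · intro c hc
    have hlen : c.blocks.length = j := (Finset.mem_filter.1 hc).2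
    rw [Finset.mem_filter, Finset.Nat.mem_antidiagonalTuple]
    refine ⟨by rw [sum_getD c.blocks hlen]; exact c.blocks_sum, fun i => ?_⟩
    have hi : (i : ℕ) < c.blocks.length := hlen ▸ i.isLt
    show c.blocks.getD i 0 ≠ 0
    rw [List.getD_eq_getElem c.blocks 0 hi]
    have := c.blocks_pos (List.getElem_mem hi)
    omega
  · intro b hb
    rw [Finset.mem_filter]
    exact ⟨Finset.mem_univ _, List.length_ofFn⟩
  · intro c hc
    apply Composition.ext
    exact ofFn_getD c.blocks (Finset.mem_filter.1 hc).2
  · intro b hb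
    funext i
    have hi : (i : ℕ) < (List.ofFn b).length := by rw [List.length_ofFn]; exact i.isLt
    show (List.ofFn b).getD i 0 = b i
    rw [List.getD_eq_getElem _ 0 hi, List.getElem_ofFn]
  · intro c hc
    rw [ofFn_getD c.blocks (Finset.mem_filter.1 hc).2]


private noncomputable def Ee : PowerSeries ℝ := PowerSeries.exp ℝ - 1

private lemma coeff_Ee (n : ℕ) :
    PowerSeries.coeff n Ee = if n = 0 then 0 else (1 / n.factorial : ℝ) := by
  rw [Ee, map_sub, PowerSeries.coeff_exp, PowerSeries.coeff_one]
  rcases eq_or_ne n 0 with rfl | hn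
  · simp
  · simp [hn]

private lemma deriv_exp' : PowerSeries.derivative ℝ (PowerSeries.exp ℝ) = PowerSeries.exp ℝ := by
  ext n
  rw [PowerSeries.coeff_derivative, PowerSeries.coeff_exp, PowerSeries.coeff_exp]
  rw [show ((algebraMap ℚ ℝ) (1 / ↑(n+1).factorial) : ℝ) = ((1 / ((n+1).factorial : ℚ) : ℚ) : ℝ) from rfl]
  rw [show ((algebraMap ℚ ℝ) (1 / ↑n.factorial) : ℝ) = ((1 / (n.factorial : ℚ) : ℚ) : ℝ) from rfl]
  push_cast
  rw [Nat.factorial_succ]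
  have h1 : ((n.factorial : ℝ)) ≠ 0 := Nat.cast_ne_zero.2 (Nat.factorial_ne_zero n)
  have h2 : ((n:ℝ) + 1) ≠ 0 := by positivity
  field_simp
  push_cast
  ring

private lemma deriv_Ee : PowerSeries.derivative ℝ Ee = PowerSeries.exp ℝ := by
  rw [Ee, map_sub, deriv_exp', Derivation.map_one_eq_zero, sub_zero]

private lemma coeff_L_zero (k : ℕ) (hk : 2 ≤ k) :
    PowerSeries.coeff k (∑ j ∈ Finset.range (k+1),
      PowerSeries.C ((-1:ℝ)^(j-1) / (j:ℝ)) * Ee ^ j) = 0 := by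
  set L : PowerSeries ℝ := ∑ j ∈ Finset.range (k+1),
      PowerSeries.C ((-1:ℝ)^(j-1) / (j:ℝ)) * Ee ^ j with hL
  have hdL : PowerSeries.derivative ℝ L = 1 - (-Ee)^k := by
    rw [hL, map_sum]
    have hterm : ∀ j ∈ Finset.range (k+1),
        PowerSeries.derivative ℝ (PowerSeries.C ((-1:ℝ)^(j-1) / (j:ℝ)) * Ee ^ j)
          = (if j = 0 then 0 else (-1:ℝ⟦X⟧)^(j-1) * Ee^(j-1) * (1 + Ee)) := by
      intro j _
      rw [Derivation.leibniz, PowerSeries.derivative_C, smul_zero, add_zero]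
      rcases eq_or_ne j 0 with rfl | hj
      · simp
      · rw [Derivation.leibniz_pow, deriv_Ee]
        simp only [if_neg hj]
        have hexp : PowerSeries.exp ℝ = 1 + Ee := by rw [Ee]; ring
        rw [hexp]
        rw [smul_eq_mul, smul_eq_mul, nsmul_eq_mul]
        rw [show ((j : ℝ⟦X⟧)) = PowerSeries.C (j:ℝ) from (map_natCast (PowerSeries.C (R := ℝ)) j).symm]
        rw [← mul_assoc, ← map_mul]
        rw [div_mul_cancel₀ ((-1:ℝ)^(j-1)) (Nat.cast_ne_zero.2 hj)]
        rw [map_pow, map_neg, map_one]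
        ring
    rw [Finset.sum_congr rfl hterm, Finset.sum_range_succ']
    rw [if_pos rfl, add_zero]
    have hstep : ∀ i ∈ Finset.range k, (if i + 1 = 0 then (0:ℝ⟦X⟧) else
        (-1:ℝ⟦X⟧)^(i+1-1) * Ee^(i+1-1) * (1 + Ee)) = (-Ee)^i * (1 + Ee) := by
      intro i _
      rw [if_neg (Nat.succ_ne_zero i), Nat.add_sub_cancel]
      ring
    rw [Finset.sum_congr rfl hstep, ← Finset.sum_mul]
    have hg := geom_sum_mul (-Ee) k
    linear_combination (-1 : ℝ⟦X⟧) * hg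
  -- extract coefficient k
  have hk1 : (k - 1) + 1 = k := Nat.sub_add_cancel (by omega : 1 ≤ k)
  have h1 : PowerSeries.coeff (k-1) (PowerSeries.derivative ℝ L)
      = PowerSeries.coeff k L * (k : ℝ) := by
    rw [PowerSeries.coeff_derivative, hk1]
    congr 1
    exact_mod_cast congrArg (Nat.cast : ℕ → ℝ) hk1
  have h2 : PowerSeries.coeff (k-1) ((1 : ℝ⟦X⟧) - (-Ee)^k) = 0 := by
    rw [map_sub, PowerSeries.coeff_one, if_neg (by omega : ¬ (k - 1 = 0))]
    have hdvd : (PowerSeries.X : ℝ⟦X⟧) ∣ -Ee := by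
      rw [PowerSeries.X_dvd_iff, map_neg]
      have : PowerSeries.constantCoeff Ee = 0 := by
        have := coeff_Ee 0
        rwa [PowerSeries.coeff_zero_eq_constantCoeff, if_pos rfl] at this
      rw [this, neg_zero]
    obtain ⟨ψ, hψ⟩ := pow_dvd_pow_of_dvd hdvd k
    rw [hψ, mul_comm, PowerSeries.coeff_mul_X_pow', if_neg (by omega)]
    ring
  rw [hdL, h2] at h1
  have hkne : (k : ℝ) ≠ 0 := Nat.cast_ne_zero.2 (by omega)
  exact (mul_eq_zero.mp h1.symm).resolve_right hkne


private lemma key (k : ℕ) (hk : 2 ≤ k) :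
    ∑ c : Composition k, ((-1:ℝ)^(c.length-1)/(c.length:ℝ)) *
      ∏ i, (1/(((c.blocksFun i).factorial : ℝ))) = 0 := by
  have h1 : ∀ c : Composition k,
      ((-1:ℝ)^(c.length-1)/(c.length:ℝ)) * ∏ i, (1/(((c.blocksFun i).factorial : ℝ)))
      = (fun Lst : List ℕ => ((-1:ℝ)^(Lst.length-1)/(Lst.length:ℝ)) *
          (Lst.map fun a => (1/(a.factorial):ℝ)).prod) c.blocks := by
    intro c
    simp only
    congr 1
    rw [← Composition.ofFn_blocksFun c, List.map_ofFn, List.prod_ofFn]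
    rfl
  rw [Finset.sum_congr rfl fun c _ => h1 c,
    comp_sum k (fun Lst => ((-1:ℝ)^(Lst.length-1)/(Lst.length:ℝ)) *
      (Lst.map fun a => (1/(a.factorial):ℝ)).prod)]
  have h2 : ∀ j : ℕ, (∑ b ∈ (Finset.Nat.antidiagonalTuple j k).filter
      (fun b => ∀ i, b i ≠ 0), ∏ i, (1/(((b i).factorial : ℝ))))
      = PowerSeries.coeff k (Ee ^ j) := by
    intro j
    rw [coeff_pow_tuple, Finset.sum_filter]
    refine Finset.sum_congr rfl fun b _ => ?_
    by_cases h : ∀ i, b i ≠ 0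
    · rw [if_pos h]
      exact Finset.prod_congr rfl fun i _ => by rw [coeff_Ee, if_neg (h i)]
    · rw [if_neg h]
      push_neg at h; obtain ⟨i, hi⟩ := h
      exact (Finset.prod_eq_zero (Finset.mem_univ i) (by rw [coeff_Ee, if_pos hi])).symm
  have h3 : ∀ j ∈ Finset.range (k+1), (∑ b ∈ (Finset.Nat.antidiagonalTuple j k).filter
      (fun b => ∀ i, b i ≠ 0),
        ((-1:ℝ)^((List.ofFn b).length-1)/((List.ofFn b).length:ℝ)) *
          ((List.ofFn b).map fun a => (1/(a.factorial):ℝ)).prod)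
      = ((-1:ℝ)^(j-1)/(j:ℝ)) * PowerSeries.coeff k (Ee ^ j) := by
    intro j _
    rw [← h2 j, Finset.mul_sum]
    refine Finset.sum_congr rfl fun b _ => ?_
    rw [List.length_ofFn, List.map_ofFn, List.prod_ofFn]
    rfl
  rw [Finset.sum_congr rfl h3]
  have h4 := coeff_L_zero k hk
  rw [map_sum] at h4
  rw [← h4]
  exact Finset.sum_congr rfl fun j _ => by rw [PowerSeries.coeff_C_mul]

private lemma coefSum (k : ℕ) (hk : 2 ≤ k) :
    ∑ c : Composition k, ((-1:ℝ)^(c.length-1)/(c.length:ℝ)) *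
      ((k.factorial : ℝ) / ∏ i, ((c.blocksFun i).factorial : ℝ)) = 0 := by
  have h : ∀ c : Composition k, ((-1:ℝ)^(c.length-1)/(c.length:ℝ)) *
      ((k.factorial : ℝ) / ∏ i, ((c.blocksFun i).factorial : ℝ))
      = (k.factorial : ℝ) * (((-1:ℝ)^(c.length-1)/(c.length:ℝ)) *
          ∏ i, (1/(((c.blocksFun i).factorial : ℝ)))) := by
    intro c
    simp only [one_div, ← Finset.prod_inv_distrib, div_eq_mul_inv, one_mul]
    ring
  rw [Finset.sum_congr rfl fun c _ => h c, ← Finset.mul_sum, key k hk, mul_zero]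

end Aux

section Main
open Finset

private lemma contDiff_finprod {ι : Type*} {E : Type*} [NormedAddCommGroup E]
    [NormedSpace ℝ E] (s : Finset ι) (g : ι → E → ℝ)
    (h : ∀ i ∈ s, ContDiff ℝ 2 (g i)) : ContDiff ℝ 2 (fun x => ∏ i ∈ s, g i x) := by
  classical
  induction s using Finset.induction with
  | empty => simpa using contDiff_const
  | insert a s hns ih =>
    simp only [Finset.prod_insert hns]
    exact (h _ (Finset.mem_insert_self _ _)).mul (ih fun i hi => h i (Finset.mem_insert_of_mem hi))

end Main

/-- for `f` of class `C²`, `k ≥ 3`, `z_0 ∈ ℂ` and `m, l ∈ {1,2}`,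
`Σ_{1 ≤ r_1, r_2 ≤ k} (∂_{r_1 m} ∂_{r_2 l} G_k)(z_0,…,z_0) = 0`. -/
theorem cumulantG_diag_second_deriv_full_sum (f : ℂ → ℝ) (hf : ContDiff ℝ 2 f)
    (k : ℕ) (hk : 3 ≤ k) (z0 : ℂ) (m l : Fin 2) :
    ∑ r₁ : Fin k, ∑ r₂ : Fin k,
      fderiv ℝ (fun z => fderiv ℝ (cumulantG f k) z (coordDir k r₂ l))
        (fun _ => z0) (coordDir k r₁ m) = 0 := by
  classical
  set G := cumulantG f k with hGdef
  have hG : ContDiff ℝ 2 G := by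
    rw [hGdef]; unfold cumulantG
    apply ContDiff.sum
    intro c _
    apply ContDiff.mul contDiff_const
    apply contDiff_finprod
    intro i _
    exact (hf.comp (ContinuousLinearMap.proj (R := ℝ)
      (φ := fun _ : Fin k => ℂ) (Fin.castLE c.length_le i)).contDiff).pow _
  have hGdiff : Differentiable ℝ G := hG.differentiable (by norm_num)
  have hA : ContDiff ℝ 1 (fderiv ℝ G) := hG.fderiv_right (by norm_num)
  have hψ : ∀ v : Fin k → ℂ, ContDiff ℝ 1 (fun z => fderiv ℝ G z v) := fun v =>
    (ContinuousLinearMap.apply ℝ ℝ v).contDiff.comp hA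
  set e : Fin 2 → ℂ := fun j => if j = 0 then (1:ℂ) else Complex.I with he
  have hcoord : ∀ j : Fin 2, ∑ r : Fin k, coordDir k r j = fun _ => e j := by
    intro j
    have := Finset.univ_sum_single (fun _ : Fin k => e j)
    simpa [coordDir, he] using this
  set p : Fin k → ℂ := fun _ => z0 with hp
  set Φ : (Fin k → ℂ) → ℝ := fun z => fderiv ℝ G z (fun _ => e l) with hΦ
  have hΦdiff : ContDiff ℝ 1 Φ := hψ _
  have step1 : ∀ r₁ : Fin k,
      (∑ r₂ : Fin k, fderiv ℝ (fun z => fderiv ℝ G z (coordDir k r₂ l)) p (coordDir k r₁ m))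
        = fderiv ℝ Φ p (coordDir k r₁ m) := by
    intro r₁
    have hΦeq : Φ = fun z => ∑ r₂ : Fin k, fderiv ℝ G z (coordDir k r₂ l) := by
      funext z
      rw [hΦ]
      simp only
      rw [← map_sum (fderiv ℝ G z) (fun r₂ => coordDir k r₂ l) Finset.univ, hcoord l]
    have hfd : fderiv ℝ Φ p
        = ∑ r₂ : Fin k, fderiv ℝ (fun z => fderiv ℝ G z (coordDir k r₂ l)) p := by
      rw [hΦeq]
      exact fderiv_fun_sum fun r₂ _ =>
        ((hψ (coordDir k r₂ l)).differentiable one_ne_zero).differentiableAt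
    rw [hfd, ContinuousLinearMap.sum_apply]
  rw [Finset.sum_congr rfl fun r₁ _ => step1 r₁,
    ← map_sum (fderiv ℝ Φ p) (fun r₁ => coordDir k r₁ m) Finset.univ, hcoord m]
  -- now: fderiv ℝ Φ p (fun _ => e m) = 0
  set Lc : ℂ →L[ℝ] (Fin k → ℂ) :=
    ContinuousLinearMap.pi (fun _ : Fin k => ContinuousLinearMap.id ℝ ℂ) with hLc
  have hLcApp : ∀ w : ℂ, Lc w = fun _ => w := fun w => rfl
  have hGL : (G ∘ Lc) = fun _ : ℂ => (0:ℝ) := by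
    funext w
    show G (Lc w) = 0
    rw [hLcApp w, hGdef]
    unfold cumulantG
    have hterm : ∀ c : Composition k,
        ((-1 : ℝ) ^ (c.length - 1) / (c.length : ℝ)) *
          ((Nat.factorial k : ℝ) / ∏ i : Fin c.length, (Nat.factorial (c.blocksFun i) : ℝ)) *
          ∏ i : Fin c.length, f w ^ (c.blocksFun i)
        = (((-1 : ℝ) ^ (c.length - 1) / (c.length : ℝ)) *
          ((Nat.factorial k : ℝ) / ∏ i : Fin c.length, (Nat.factorial (c.blocksFun i) : ℝ))) *
          f w ^ k := by
      intro c
      rw [Finset.prod_pow_eq_pow_sum, Composition.sum_blocksFun]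
    rw [Finset.sum_congr rfl fun c _ => hterm c, ← Finset.sum_mul,
      coefSum k (by omega), zero_mul]
  have hΦL : (Φ ∘ Lc) = fun _ : ℂ => (0:ℝ) := by
    funext w
    show Φ (Lc w) = 0
    have hchain : fderiv ℝ (G ∘ Lc) w = (fderiv ℝ G (Lc w)).comp Lc := by
      rw [fderiv_comp w (hGdiff (Lc w)) Lc.differentiableAt, Lc.fderiv]
    have h0 : fderiv ℝ (G ∘ Lc) w = 0 := by rw [hGL]; simp
    have := congrArg (fun T => T (e l)) (hchain.symm.trans h0)
    simp only [ContinuousLinearMap.comp_apply, ContinuousLinearMap.zero_apply] at this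
    exact this
  have hchain2 : fderiv ℝ (Φ ∘ Lc) z0 = (fderiv ℝ Φ (Lc z0)).comp Lc := by
    rw [fderiv_comp z0 (hΦdiff.differentiable one_ne_zero (Lc z0))
      Lc.differentiableAt, Lc.fderiv]
  have h0 : fderiv ℝ (Φ ∘ Lc) z0 = 0 := by rw [hΦL]; simp
  have hfin := congrArg (fun T => T (e m)) (hchain2.symm.trans h0)
  simp only [ContinuousLinearMap.comp_apply, ContinuousLinearMap.zero_apply] at hfin
  exact hfin
end

section
/- Let K be a Hermitian symmetric kernel with |K(z,w)| = φ(z−w) where φ is bounded, continuous, and ∫(1+|z|³)φ(z)dA(z) < ∞, and let K_ρ(z,w) = ρK(√ρ z, √ρ w). Suppose f : ℂ → ℝ is C³ with compact support and K is reproducing. Then Var[Tr_ρ(f)] → σ_f² := (1/2)∫_ℂ∫_ℂ (∇f(z)·w)² φ(w)² dA(z) dA(w) as ρ → ∞, with error O(ρ^{-1/2}). -/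
open MeasureTheory

/-- Auxiliary: integrability and integral of `z ↦ ∫ u, ψ u * 1_T (z - c • u)`. -/
lemma conv_helper (ψ : ℂ → ℝ) (hψc : Continuous ψ) (hψi : Integrable ψ)
    (hψ0 : ∀ u, 0 ≤ ψ u) (T : Set ℂ) (hTm : MeasurableSet T) (hTfin : volume T ≠ ⊤)
    (c : ℝ) :
    Integrable (fun z : ℂ => ∫ u : ℂ, ψ u * Set.indicator T (fun _ => (1:ℝ)) (z - c • u)) ∧
    ∫ z : ℂ, (∫ u : ℂ, ψ u * Set.indicator T (fun _ => (1:ℝ)) (z - c • u))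
      = (∫ u : ℂ, ψ u) * (volume T).toReal := by
  set W : ℂ × ℂ → ℝ := fun p => ψ p.1 * Set.indicator T (fun _ => (1:ℝ)) (p.2 - c • p.1) with hW
  have hmap : Measurable fun p : ℂ × ℂ => p.2 - c • p.1 :=
    measurable_snd.sub (measurable_fst.const_smul c)
  have hWm : AEStronglyMeasurable W ((volume : Measure ℂ).prod volume) := by
    apply Measurable.aestronglyMeasurable
    exact (hψc.measurable.comp measurable_fst).mul
      ((measurable_const.indicator hTm).comp hmap)
  have hind : Integrable (Set.indicator T (fun _ => (1:ℝ))) := by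
    rw [integrable_indicator_iff hTm]
    exact integrableOn_const hTfin
  have hindint : ∀ a : ℂ, ∫ z : ℂ, Set.indicator T (fun _ => (1:ℝ)) (z - a)
      = (volume T).toReal := by
    intro a
    rw [integral_sub_right_eq_self (Set.indicator T (fun _ => (1:ℝ))) a,
      integral_indicator_const (1:ℝ) hTm]
    simp [Measure.real]
  have hWi : Integrable W ((volume : Measure ℂ).prod volume) := by
    rw [integrable_prod_iff hWm]
    constructor
    · refine Filter.Eventually.of_forall (fun u => ?_)
      exact (hind.comp_sub_right (c • u)).const_mul (ψ u)
    · have : (fun u : ℂ => ∫ z : ℂ, ‖W (u, z)‖) = fun u => ψ u * (volume T).toReal := by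
        funext u
        have : (fun z : ℂ => ‖W (u, z)‖)
            = fun z => ψ u * Set.indicator T (fun _ => (1:ℝ)) (z - c • u) := by
          funext z
          simp only [hW, Real.norm_eq_abs, abs_of_nonneg (mul_nonneg (hψ0 u)
            (Set.indicator_nonneg (fun _ _ => zero_le_one) _))]
        rw [this, integral_const_mul, hindint]
      rw [this]
      exact hψi.mul_const _
  constructor
  · exact hWi.integral_prod_right
  · have hswap := integral_integral_swap (μ := (volume : Measure ℂ))
      (ν := (volume : Measure ℂ)) (f := fun z u => W (u, z)) ?_
    · rw [hswap]
      have : (fun u : ℂ => ∫ z : ℂ, W (u, z)) = fun u => ψ u * (volume T).toReal := by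
        funext u
        simp only [hW]
        rw [integral_const_mul, hindint]
      rw [this, integral_mul_const]
    · exact hWi.swap

set_option maxHeartbeats 2000000 in
/-- let `K` be a Hermitian symmetric reproducing kernel with
`|K(z,w)| = φ(z−w)`, `φ` bounded continuous and `∫ (1+|z|³) φ dA < ∞`, and let
`K_ρ(z,w) = ρ K(√ρ z, √ρ w)`.  For `f : ℂ → ℝ` of class `C³` with compact support, the
variance of the linear statistic — which by the reproducing property equals
`½ ∫∫ (f(z)−f(w))² |K_ρ(z,w)|² dA dA` — converges, with error `O(ρ^{-1/2})`, to
`σ_f² = ½ ∫∫ (∇f(z)·w)² φ(w)² dA(z) dA(w)`, where `∇f(z)·w = Df(z)(w)`. -/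
theorem variance_limit_translation_invariant
    (K : ℂ → ℂ → ℂ) (φ : ℂ → ℝ) (f : ℂ → ℝ) (V : ℝ → ℝ)
    (hherm : ∀ z w, K z w = starRingEnd ℂ (K w z))
    (habs : ∀ z w, ‖K z w‖ = φ (z - w))
    (hφc : Continuous φ) (hφ0 : ∀ z, 0 ≤ φ z) (hφb : ∃ M, ∀ z, φ z ≤ M)
    (hmom : Integrable fun z : ℂ => (1 + ‖z‖ ^ 3) * φ z)
    (hrep : ∀ x y, K x y = ∫ u, K x u * K u y)
    (hf : ContDiff ℝ 3 f) (hsupp : HasCompactSupport f)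
    (hV : ∀ ρ : ℝ, 0 < ρ →
      V ρ = (1 / 2) * ∫ z, ∫ w,
        (f z - f w) ^ 2
          * ‖(ρ : ℂ) * K ((Real.sqrt ρ : ℂ) * z) ((Real.sqrt ρ : ℂ) * w)‖ ^ 2) :
    ∃ C : ℝ, ∀ ρ : ℝ, 1 ≤ ρ →
      |V ρ - (1 / 2) * ∫ z, ∫ w, (fderiv ℝ f z w) ^ 2 * φ w ^ 2|
        ≤ C / Real.sqrt ρ := by
  classical
  have hfc : Continuous f := hf.continuous
  have hfd : Differentiable ℝ f := hf.differentiable (by norm_num)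
  set g : ℂ → (ℂ →L[ℝ] ℝ) := fderiv ℝ f with hgdef
  have hgc : Continuous g := hf.continuous_fderiv (by norm_num)
  have hgs : HasCompactSupport g := hsupp.fderiv ℝ
  obtain ⟨C₁', hC₁'⟩ := hgs.exists_bound_of_continuous hgc
  set C₁ : ℝ := max C₁' 0 with hC₁def
  have hC₁0 : 0 ≤ C₁ := le_max_right _ _
  have hC₁ : ∀ x, ‖g x‖ ≤ C₁ := fun x => (hC₁' x).trans (le_max_left _ _)
  have hg2 : ContDiff ℝ 2 g := hf.fderiv_right (by norm_num)
  have hgd : Differentiable ℝ g := hg2.differentiable (by norm_num)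
  have hg2s : HasCompactSupport (fderiv ℝ g) := hgs.fderiv ℝ
  have hcf : Continuous (fderiv ℝ g) := hg2.continuous_fderiv (by norm_num)
  have hb : ∃ C, ∀ x, ‖fderiv ℝ g x‖ ≤ C :=
    HasCompactSupport.exists_bound_of_continuous (E := ℂ →L[ℝ] ℂ →L[ℝ] ℝ) hg2s hcf
  obtain ⟨C₂', hC₂'⟩ := hb
  set C₂ : ℝ := max C₂' 0 with hC₂def
  have hC₂0 : 0 ≤ C₂ := le_max_right _ _
  have hC₂ : ∀ x, ‖fderiv ℝ g x‖ ≤ C₂ := fun x => (hC₂' x).trans (le_max_left _ _)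
  -- Lipschitz bounds
  have hflip : ∀ x y : ℂ, |f x - f y| ≤ C₁ * ‖x - y‖ := by
    intro x y
    have := Convex.norm_image_sub_le_of_norm_fderiv_le (f := f)
      (fun x _ => hfd x) (fun x _ => hC₁ x) convex_univ (Set.mem_univ y) (Set.mem_univ x)
    simpa [Real.norm_eq_abs] using this
  have hglip : ∀ x y : ℂ, ‖g x - g y‖ ≤ C₂ * ‖x - y‖ := by
    intro x y
    exact Convex.norm_image_sub_le_of_norm_fderiv_le (f := g)
      (fun x _ => hgd x) (fun x _ => hC₂ x) convex_univ (Set.mem_univ y) (Set.mem_univ x)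
  -- second order Taylor bound
  have hTaylor : ∀ z h : ℂ, |f (z + h) - f z - g z h| ≤ C₂ * ‖h‖ * ‖h‖ := by
    intro z h
    have hmem1 : z ∈ Metric.closedBall z ‖h‖ := Metric.mem_closedBall_self (norm_nonneg h)
    have hmem2 : z + h ∈ Metric.closedBall z ‖h‖ := by
      simp [Metric.mem_closedBall, dist_eq_norm]
    have := Convex.norm_image_sub_le_of_norm_fderiv_le' (f := f) (φ := g z)
      (C := C₂ * ‖h‖) (fun x _ => hfd x)
      (fun x hx => by
        have h1 : ‖g x - g z‖ ≤ C₂ * ‖x - z‖ := hglip x z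
        have h2 : ‖x - z‖ ≤ ‖h‖ := by
          rw [← dist_eq_norm]; exact Metric.mem_closedBall.1 hx
        exact h1.trans (by nlinarith))
      (convex_closedBall z ‖h‖) hmem1 hmem2
    simpa [add_sub_cancel_left, Real.norm_eq_abs, mul_assoc] using this
  -- bound on φ
  obtain ⟨M', hM'⟩ := hφb
  set M : ℝ := max M' 0 with hMdef
  have hM0 : 0 ≤ M := le_max_right _ _
  have hM : ∀ z, φ z ≤ M := fun z => (hM' z).trans (le_max_left _ _)
  -- weights
  have hψint : ∀ k : ℕ, (∀ u : ℂ, ‖u‖ ^ k ≤ 1 + ‖u‖ ^ 3) →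
      Integrable (fun u : ℂ => ‖u‖ ^ k * φ u ^ 2) := by
    intro k hk
    refine (hmom.const_mul M).mono'
      (((continuous_norm.pow k).mul (hφc.pow 2)).aestronglyMeasurable)
      (Filter.Eventually.of_forall fun u => ?_)
    have h2 : (0:ℝ) ≤ ‖u‖ ^ k * φ u ^ 2 := by positivity
    rw [Real.norm_eq_abs, abs_of_nonneg h2]
    calc ‖u‖ ^ k * φ u ^ 2 = (‖u‖ ^ k * φ u) * φ u := by ring
    _ ≤ (‖u‖ ^ k * φ u) * M :=
      mul_le_mul_of_nonneg_left (hM u) (mul_nonneg (by positivity) (hφ0 u))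
    _ = M * (‖u‖ ^ k * φ u) := by ring
    _ ≤ M * ((1 + ‖u‖ ^ 3) * φ u) :=
      mul_le_mul_of_nonneg_left (mul_le_mul_of_nonneg_right (hk u) (hφ0 u)) hM0
  have hψ2 : Integrable (fun u : ℂ => ‖u‖ ^ 2 * φ u ^ 2) := by
    refine hψint 2 (fun u => ?_)
    nlinarith [mul_nonneg (sq_nonneg (‖u‖ - 1)) (norm_nonneg u), sq_nonneg (‖u‖ - 1/2)]
  have hψ3 : Integrable (fun u : ℂ => ‖u‖ ^ 3 * φ u ^ 2) := by
    refine hψint 3 (fun u => ?_)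
    linarith [norm_nonneg u]
  have hψ2c : Continuous (fun u : ℂ => ‖u‖ ^ 2 * φ u ^ 2) :=
    (continuous_norm.pow 2).mul (hφc.pow 2)
  have hψ3c : Continuous (fun u : ℂ => ‖u‖ ^ 3 * φ u ^ 2) :=
    (continuous_norm.pow 3).mul (hφc.pow 2)
  have hψ20 : ∀ u : ℂ, 0 ≤ ‖u‖ ^ 2 * φ u ^ 2 := fun u => by positivity
  have hψ30 : ∀ u : ℂ, 0 ≤ ‖u‖ ^ 3 * φ u ^ 2 := fun u => by positivity
  set M2 : ℝ := ∫ u : ℂ, ‖u‖ ^ 2 * φ u ^ 2 with hM2def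
  set M3 : ℝ := ∫ u : ℂ, ‖u‖ ^ 3 * φ u ^ 2 with hM3def
  -- the support
  set Ks : Set ℂ := tsupport f with hKsdef
  have hKm : MeasurableSet Ks := (isClosed_tsupport f).measurableSet
  have hKfin : volume Ks ≠ ⊤ := hsupp.measure_lt_top.ne
  have hindi : Integrable (Set.indicator Ks (fun _ => (1:ℝ))) := by
    rw [integrable_indicator_iff hKm]
    exact integrableOn_const hKfin
  have hindm : Measurable (Set.indicator Ks (fun _ => (1:ℝ))) :=
    measurable_const.indicator hKm
  have hind0 : ∀ x : ℂ, 0 ≤ Set.indicator Ks (fun _ => (1:ℝ)) x :=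
    fun x => Set.indicator_nonneg (fun _ _ => zero_le_one) x
  have hind1 : ∀ x : ℂ, Set.indicator Ks (fun _ => (1:ℝ)) x ≤ 1 :=
    fun x => Set.indicator_apply_le' (fun _ => le_rfl) (fun _ => zero_le_one)
  have hgz0 : ∀ z : ℂ, z ∉ Ks → g z = 0 := by
    intro z hz
    by_contra hne
    exact hz (support_fderiv_subset ℝ hne)
  -- the constant
  refine ⟨2 * C₁ * C₂ * M3 * (volume Ks).toReal, fun ρ hρ => ?_⟩
  have hρ0 : (0:ℝ) < ρ := by linarith
  set s : ℝ := Real.sqrt ρ with hsdef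
  have hs1 : 1 ≤ s := by
    rw [hsdef, show (1:ℝ) = Real.sqrt 1 by simp]; exact Real.sqrt_le_sqrt hρ
  have hs0 : (0:ℝ) < s := by linarith
  have hsq : s ^ 2 = ρ := Real.sq_sqrt hρ0.le
  have hss : s * s = ρ := by nlinarith
  -- main objects
  set A : ℂ → ℝ := fun z => ∫ u : ℂ, ρ * (f z - f (z - s⁻¹ • u)) ^ 2 * φ u ^ 2 with hAdef
  set B : ℂ → ℝ := fun z => ∫ w : ℂ, (fderiv ℝ f z w) ^ 2 * φ w ^ 2 with hBdef
  -- basic smul facts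
  have hsmul_cancel : ∀ u : ℂ, s • s⁻¹ • u = u := by
    intro u; rw [smul_smul, mul_inv_cancel₀ hs0.ne', one_smul]
  have hnh : ∀ u : ℂ, ‖s⁻¹ • u‖ = s⁻¹ * ‖u‖ := by
    intro u; rw [norm_smul, Real.norm_eq_abs, abs_of_pos (inv_pos.2 hs0)]
  have hsh : ∀ u : ℂ, s * ‖s⁻¹ • u‖ = ‖u‖ := by
    intro u; rw [hnh]; field_simp
  -- the evaluation identity
  have hYeq : ∀ z u : ℂ, g z u = s * g z (s⁻¹ • u) := by
    intro z u
    conv_lhs => rw [← hsmul_cancel u]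
    rw [_root_.map_smul, smul_eq_mul]
  -- global pointwise bound
  have core1 : ∀ z u : ℂ,
      |ρ * (f z - f (z - s⁻¹ • u)) ^ 2 - g z u ^ 2| ≤ 2 * C₁ * C₂ / s * ‖u‖ ^ 3 := by
    intro z u
    set h : ℂ := s⁻¹ • u with hh
    set Δ : ℝ := f z - f (z - h) with hΔ
    have hΔle : |Δ| ≤ C₁ * ‖h‖ := by
      have := hflip z (z - h)
      simpa [sub_sub_cancel] using this
    have hgzh : |g z h| ≤ C₁ * ‖h‖ := by
      have h1 : ‖g z h‖ ≤ ‖g z‖ * ‖h‖ := (g z).le_opNorm h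
      have h2 : ‖g z‖ * ‖h‖ ≤ C₁ * ‖h‖ :=
        mul_le_mul_of_nonneg_right (hC₁ z) (norm_nonneg h)
      simpa [Real.norm_eq_abs] using h1.trans h2
    have htay : |Δ - g z h| ≤ C₂ * ‖h‖ * ‖h‖ := by
      have h1 := hTaylor z (-h)
      rw [norm_neg] at h1
      have h2 : Δ - g z h = -(f (z + -h) - f z - g z (-h)) := by
        have e : z + -h = z - h := by ring
        rw [hΔ, e, map_neg]
        ring
      rw [h2, abs_neg]
      exact h1
    have he : ρ * Δ ^ 2 - g z u ^ 2 = (s * Δ - g z u) * (s * Δ + g z u) := by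
      rw [← hss]; ring
    rw [he, abs_mul]
    have b1 : |s * Δ - g z u| ≤ C₂ * ‖u‖ ^ 2 / s := by
      rw [hYeq z u, ← mul_sub, abs_mul, abs_of_pos hs0]
      have : s * |Δ - g z h| ≤ s * (C₂ * ‖h‖ * ‖h‖) :=
        mul_le_mul_of_nonneg_left htay hs0.le
      refine this.trans (le_of_eq ?_)
      rw [hnh]
      field_simp
    have b2 : |s * Δ + g z u| ≤ 2 * C₁ * ‖u‖ := by
      have h1 : |s * Δ + g z u| ≤ |s * Δ| + |g z u| := abs_add_le _ _
      have h2 : |s * Δ| ≤ C₁ * ‖u‖ := by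
        rw [abs_mul, abs_of_pos hs0]
        calc s * |Δ| ≤ s * (C₁ * ‖h‖) := mul_le_mul_of_nonneg_left hΔle hs0.le
        _ = C₁ * (s * ‖h‖) := by ring
        _ = C₁ * ‖u‖ := by rw [hsh]
      have h3 : |g z u| ≤ C₁ * ‖u‖ := by
        rw [hYeq z u, abs_mul, abs_of_pos hs0]
        calc s * |g z h| ≤ s * (C₁ * ‖h‖) := mul_le_mul_of_nonneg_left hgzh hs0.le
        _ = C₁ * (s * ‖h‖) := by ring
        _ = C₁ * ‖u‖ := by rw [hsh]
      linarith
    calc |s * Δ - g z u| * |s * Δ + g z u|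
        ≤ (C₂ * ‖u‖ ^ 2 / s) * (2 * C₁ * ‖u‖) :=
          mul_le_mul b1 b2 (abs_nonneg _) (by positivity)
    _ = 2 * C₁ * C₂ / s * ‖u‖ ^ 3 := by ring
  -- unconditional quadratic bounds
  have coreA0 : ∀ z u : ℂ, ρ * (f z - f (z - s⁻¹ • u)) ^ 2 ≤ C₁ ^ 2 * ‖u‖ ^ 2 := by
    intro z u
    have h2 : |s * (f z - f (z - s⁻¹ • u))| ≤ C₁ * ‖u‖ := by
      rw [abs_mul, abs_of_pos hs0]
      have hΔle : |f z - f (z - s⁻¹ • u)| ≤ C₁ * ‖s⁻¹ • u‖ := by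
        have := hflip z (z - s⁻¹ • u)
        simpa [sub_sub_cancel] using this
      calc s * |f z - f (z - s⁻¹ • u)| ≤ s * (C₁ * ‖s⁻¹ • u‖) :=
        mul_le_mul_of_nonneg_left hΔle hs0.le
      _ = C₁ * (s * ‖s⁻¹ • u‖) := by ring
      _ = C₁ * ‖u‖ := by rw [hsh]
    have h3 : (s * (f z - f (z - s⁻¹ • u))) ^ 2 ≤ (C₁ * ‖u‖) ^ 2 :=
      sq_le_sq' (by linarith [abs_le.1 h2]) (by linarith [abs_le.1 h2])
    calc ρ * (f z - f (z - s⁻¹ • u)) ^ 2 = (s * (f z - f (z - s⁻¹ • u))) ^ 2 := by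
          rw [← hss]; ring
    _ ≤ (C₁ * ‖u‖) ^ 2 := h3
    _ = C₁ ^ 2 * ‖u‖ ^ 2 := by ring
  have coreB0 : ∀ z u : ℂ, g z u ^ 2 ≤ C₁ ^ 2 * ‖u‖ ^ 2 := by
    intro z u
    have h1 : ‖g z u‖ ≤ C₁ * ‖u‖ :=
      ((g z).le_opNorm u).trans (mul_le_mul_of_nonneg_right (hC₁ z) (norm_nonneg u))
    rw [Real.norm_eq_abs] at h1
    have h3 : g z u ^ 2 ≤ (C₁ * ‖u‖) ^ 2 :=
      sq_le_sq' (by linarith [abs_le.1 h1]) (by linarith [abs_le.1 h1])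
    calc g z u ^ 2 ≤ (C₁ * ‖u‖) ^ 2 := h3
    _ = C₁ ^ 2 * ‖u‖ ^ 2 := by ring
  -- vanishing off the support
  have hvanish : ∀ z u : ℂ, z ∉ Ks → (z - s⁻¹ • u) ∉ Ks →
      f z = 0 ∧ f (z - s⁻¹ • u) = 0 ∧ g z u = 0 := by
    intro z u hz hz'
    refine ⟨image_eq_zero_of_notMem_tsupport hz, image_eq_zero_of_notMem_tsupport hz', ?_⟩
    rw [hgz0 z hz]
    rfl
  -- inner integral rewrite
  have hinner : ∀ z : ℂ,
      (∫ w : ℂ, (f z - f w) ^ 2 * ‖(ρ : ℂ) * K ((s : ℂ) * z) ((s : ℂ) * w)‖ ^ 2) = A z := by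
    intro z
    have e1 : (fun w : ℂ => (f z - f w) ^ 2 * ‖(ρ : ℂ) * K ((s : ℂ) * z) ((s : ℂ) * w)‖ ^ 2)
        = fun w => (f z - f w) ^ 2 * (ρ ^ 2 * φ (s • (z - w)) ^ 2) := by
      funext w
      have h1 : ‖(ρ:ℂ)‖ = ρ := by
        rw [Complex.norm_real, Real.norm_eq_abs, abs_of_pos hρ0]
      have h2 : (s:ℂ) * z - (s:ℂ) * w = s • (z - w) := by
        rw [Complex.real_smul, mul_sub]
      rw [norm_mul, h1, habs, h2, mul_pow]
    rw [show (∫ w : ℂ, (f z - f w) ^ 2 * ‖(ρ : ℂ) * K ((s : ℂ) * z) ((s : ℂ) * w)‖ ^ 2)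
        = ∫ w : ℂ, (f z - f w) ^ 2 * (ρ ^ 2 * φ (s • (z - w)) ^ 2) from by rw [e1]]
    set G : ℂ → ℝ := fun w => (f z - f (z - w)) ^ 2 * (ρ ^ 2 * φ (s • w) ^ 2) with hGdef
    have e2 : (∫ w : ℂ, (f z - f w) ^ 2 * (ρ ^ 2 * φ (s • (z - w)) ^ 2)) = ∫ w : ℂ, G w := by
      rw [← integral_sub_left_eq_self
        (fun w : ℂ => (f z - f w) ^ 2 * (ρ ^ 2 * φ (s • (z - w)) ^ 2)) volume z]
      congr 1
      funext w
      simp only [sub_sub_cancel, hGdef]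
    have e3 : (∫ u : ℂ, G (s⁻¹ • u)) = ρ * ∫ w : ℂ, G w := by
      have h := MeasureTheory.Measure.integral_comp_inv_smul_of_nonneg
        (volume : Measure ℂ) G hs0.le
      simpa [Complex.finrank_real_complex, hsq, smul_eq_mul] using h
    have e4 : (fun u : ℂ => G (s⁻¹ • u))
        = fun u : ℂ => ρ * (ρ * (f z - f (z - s⁻¹ • u)) ^ 2 * φ u ^ 2) := by
      funext u
      simp only [hGdef, hsmul_cancel u]
      ring
    have e5 : (∫ u : ℂ, G (s⁻¹ • u)) = ρ * A z := by
      rw [e4, integral_const_mul]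
    rw [e2]
    exact mul_left_cancel₀ (ne_of_gt hρ0) (e3.symm.trans e5)
  -- V in terms of A
  have hVA : V ρ = (1 / 2) * ∫ z : ℂ, A z := by
    rw [hV ρ hρ0]
    congr 1
    exact integral_congr_ae (Filter.Eventually.of_forall fun z => hinner z)
  -- measurability of translated indicator
  have hindcomp : ∀ z : ℂ,
      Measurable fun u : ℂ => Set.indicator Ks (fun _ => (1:ℝ)) (z - s⁻¹ • u) :=
    fun z => hindm.comp (measurable_const.sub (measurable_id.const_smul s⁻¹))
  -- integrability of ψ * translated indicator
  have hmulind : ∀ (ψ : ℂ → ℝ), Continuous ψ → Integrable ψ → (∀ u, 0 ≤ ψ u) →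
      ∀ z : ℂ, Integrable
        (fun u : ℂ => ψ u * Set.indicator Ks (fun _ => (1:ℝ)) (z - s⁻¹ • u)) := by
    intro ψ hc hi h0 z
    refine hi.mono' ((hc.measurable.mul (hindcomp z)).aestronglyMeasurable)
      (Filter.Eventually.of_forall fun u => ?_)
    have e0 : (0:ℝ) ≤ ψ u * Set.indicator Ks (fun _ => (1:ℝ)) (z - s⁻¹ • u) :=
      mul_nonneg (h0 u) (hind0 _)
    rw [Real.norm_eq_abs, abs_of_nonneg e0]
    calc ψ u * Set.indicator Ks (fun _ => (1:ℝ)) (z - s⁻¹ • u) ≤ ψ u * 1 :=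
      mul_le_mul_of_nonneg_left (hind1 _) (h0 u)
    _ = ψ u := mul_one _
  -- integrability in u of the two integrands
  have hIA : ∀ z : ℂ, Integrable
      (fun u : ℂ => ρ * (f z - f (z - s⁻¹ • u)) ^ 2 * φ u ^ 2) := by
    intro z
    refine (hψ2.const_mul (C₁ ^ 2)).mono' ?_ (Filter.Eventually.of_forall fun u => ?_)
    · apply Continuous.aestronglyMeasurable
      have hcont : Continuous fun u : ℂ => f (z - s⁻¹ • u) :=
        hfc.comp (continuous_const.sub (continuous_id.const_smul s⁻¹))
      exact (continuous_const.mul ((continuous_const.sub hcont).pow 2)).mul (hφc.pow 2)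
    · have e0 : (0:ℝ) ≤ ρ * (f z - f (z - s⁻¹ • u)) ^ 2 * φ u ^ 2 := by positivity
      rw [Real.norm_eq_abs, abs_of_nonneg e0]
      calc ρ * (f z - f (z - s⁻¹ • u)) ^ 2 * φ u ^ 2
          ≤ (C₁ ^ 2 * ‖u‖ ^ 2) * φ u ^ 2 :=
            mul_le_mul_of_nonneg_right (coreA0 z u) (sq_nonneg _)
      _ = C₁ ^ 2 * (‖u‖ ^ 2 * φ u ^ 2) := by ring
  have hIB : ∀ z : ℂ, Integrable (fun u : ℂ => g z u ^ 2 * φ u ^ 2) := by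
    intro z
    refine (hψ2.const_mul (C₁ ^ 2)).mono' ?_ (Filter.Eventually.of_forall fun u => ?_)
    · exact (((g z).continuous.pow 2).mul (hφc.pow 2)).aestronglyMeasurable
    · have e0 : (0:ℝ) ≤ g z u ^ 2 * φ u ^ 2 := by positivity
      rw [Real.norm_eq_abs, abs_of_nonneg e0]
      calc g z u ^ 2 * φ u ^ 2 ≤ (C₁ ^ 2 * ‖u‖ ^ 2) * φ u ^ 2 :=
        mul_le_mul_of_nonneg_right (coreB0 z u) (sq_nonneg _)
      _ = C₁ ^ 2 * (‖u‖ ^ 2 * φ u ^ 2) := by ring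
  -- pointwise bound with indicators, order 3
  have core3 : ∀ z u : ℂ,
      |ρ * (f z - f (z - s⁻¹ • u)) ^ 2 * φ u ^ 2 - g z u ^ 2 * φ u ^ 2|
        ≤ (2 * C₁ * C₂ / s * Set.indicator Ks (fun _ => (1:ℝ)) z) * (‖u‖ ^ 3 * φ u ^ 2)
          + 2 * C₁ * C₂ / s *
            ((‖u‖ ^ 3 * φ u ^ 2) * Set.indicator Ks (fun _ => (1:ℝ)) (z - s⁻¹ • u)) := by
    intro z u
    have efac : ρ * (f z - f (z - s⁻¹ • u)) ^ 2 * φ u ^ 2 - g z u ^ 2 * φ u ^ 2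
        = (ρ * (f z - f (z - s⁻¹ • u)) ^ 2 - g z u ^ 2) * φ u ^ 2 := by ring
    rw [efac, abs_mul, abs_of_nonneg (sq_nonneg (φ u))]
    by_cases hz : z ∈ Ks
    · have hub : |ρ * (f z - f (z - s⁻¹ • u)) ^ 2 - g z u ^ 2| * φ u ^ 2
          ≤ (2 * C₁ * C₂ / s * ‖u‖ ^ 3) * φ u ^ 2 :=
        mul_le_mul_of_nonneg_right (core1 z u) (sq_nonneg _)
      refine hub.trans ?_
      rw [Set.indicator_of_mem hz]
      have h2 : (0:ℝ) ≤ 2 * C₁ * C₂ / s *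
          ((‖u‖ ^ 3 * φ u ^ 2) * Set.indicator Ks (fun _ => (1:ℝ)) (z - s⁻¹ • u)) := by
        have h3 := hind0 (z - s⁻¹ • u)
        have h4 : (0:ℝ) ≤ 2 * C₁ * C₂ / s := by positivity
        have h5 : (0:ℝ) ≤ ‖u‖ ^ 3 * φ u ^ 2 := by positivity
        exact mul_nonneg h4 (mul_nonneg h5 h3)
      calc (2 * C₁ * C₂ / s * ‖u‖ ^ 3) * φ u ^ 2
          = (2 * C₁ * C₂ / s * 1) * (‖u‖ ^ 3 * φ u ^ 2) := by ring
      _ ≤ _ := le_add_of_nonneg_right h2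
    · by_cases hz' : (z - s⁻¹ • u) ∈ Ks
      · rw [Set.indicator_of_notMem hz, Set.indicator_of_mem hz']
        have hub : |ρ * (f z - f (z - s⁻¹ • u)) ^ 2 - g z u ^ 2| * φ u ^ 2
            ≤ (2 * C₁ * C₂ / s * ‖u‖ ^ 3) * φ u ^ 2 :=
          mul_le_mul_of_nonneg_right (core1 z u) (sq_nonneg _)
        refine hub.trans (le_of_eq ?_)
        ring
      · obtain ⟨h1, h2, h3⟩ := hvanish z u hz hz'
        rw [Set.indicator_of_notMem hz, Set.indicator_of_notMem hz', h1, h2, h3]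
        simp
  -- pointwise bound with indicators, order 2, for A's integrand
  have coreA3 : ∀ z u : ℂ,
      ρ * (f z - f (z - s⁻¹ • u)) ^ 2 * φ u ^ 2
        ≤ (C₁ ^ 2 * Set.indicator Ks (fun _ => (1:ℝ)) z) * (‖u‖ ^ 2 * φ u ^ 2)
          + C₁ ^ 2 * ((‖u‖ ^ 2 * φ u ^ 2) * Set.indicator Ks (fun _ => (1:ℝ)) (z - s⁻¹ • u)) := by
    intro z u
    by_cases hz : z ∈ Ks
    · rw [Set.indicator_of_mem hz]
      have hub : ρ * (f z - f (z - s⁻¹ • u)) ^ 2 * φ u ^ 2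
          ≤ (C₁ ^ 2 * ‖u‖ ^ 2) * φ u ^ 2 :=
        mul_le_mul_of_nonneg_right (coreA0 z u) (sq_nonneg _)
      have h2 : (0:ℝ) ≤ C₁ ^ 2 *
          ((‖u‖ ^ 2 * φ u ^ 2) * Set.indicator Ks (fun _ => (1:ℝ)) (z - s⁻¹ • u)) := by
        have h3 := hind0 (z - s⁻¹ • u)
        have h5 : (0:ℝ) ≤ ‖u‖ ^ 2 * φ u ^ 2 := by positivity
        exact mul_nonneg (by positivity) (mul_nonneg h5 h3)
      calc ρ * (f z - f (z - s⁻¹ • u)) ^ 2 * φ u ^ 2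
          ≤ (C₁ ^ 2 * ‖u‖ ^ 2) * φ u ^ 2 := hub
      _ = (C₁ ^ 2 * 1) * (‖u‖ ^ 2 * φ u ^ 2) := by ring
      _ ≤ _ := le_add_of_nonneg_right h2
    · by_cases hz' : (z - s⁻¹ • u) ∈ Ks
      · rw [Set.indicator_of_notMem hz, Set.indicator_of_mem hz']
        have hub : ρ * (f z - f (z - s⁻¹ • u)) ^ 2 * φ u ^ 2
            ≤ (C₁ ^ 2 * ‖u‖ ^ 2) * φ u ^ 2 :=
          mul_le_mul_of_nonneg_right (coreA0 z u) (sq_nonneg _)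
        refine hub.trans (le_of_eq ?_)
        ring
      · obtain ⟨h1, h2, _⟩ := hvanish z u hz hz'
        rw [Set.indicator_of_notMem hz, Set.indicator_of_notMem hz', h1, h2]
        simp
  -- convolution facts
  obtain ⟨hconv2i, hconv2v⟩ := conv_helper (fun u : ℂ => ‖u‖ ^ 2 * φ u ^ 2)
    hψ2c hψ2 hψ20 Ks hKm hKfin s⁻¹
  obtain ⟨hconv3i, hconv3v⟩ := conv_helper (fun u : ℂ => ‖u‖ ^ 3 * φ u ^ 2)
    hψ3c hψ3 hψ30 Ks hKm hKfin s⁻¹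
  -- per-z difference bound
  have hABdiff : ∀ z : ℂ, |A z - B z|
      ≤ (2 * C₁ * C₂ / s * Set.indicator Ks (fun _ => (1:ℝ)) z) * M3
        + 2 * C₁ * C₂ / s *
          (∫ u : ℂ, (‖u‖ ^ 3 * φ u ^ 2) * Set.indicator Ks (fun _ => (1:ℝ)) (z - s⁻¹ • u)) := by
    intro z
    have hsub : A z - B z = ∫ u : ℂ,
        (ρ * (f z - f (z - s⁻¹ • u)) ^ 2 * φ u ^ 2 - g z u ^ 2 * φ u ^ 2) :=
      (integral_sub (hIA z) (hIB z)).symm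
    rw [hsub]
    have habs1 : |∫ u : ℂ,
        (ρ * (f z - f (z - s⁻¹ • u)) ^ 2 * φ u ^ 2 - g z u ^ 2 * φ u ^ 2)|
        ≤ ∫ u : ℂ, |ρ * (f z - f (z - s⁻¹ • u)) ^ 2 * φ u ^ 2 - g z u ^ 2 * φ u ^ 2| := by
      simpa [Real.norm_eq_abs] using norm_integral_le_integral_norm
        (fun u : ℂ => ρ * (f z - f (z - s⁻¹ • u)) ^ 2 * φ u ^ 2 - g z u ^ 2 * φ u ^ 2)
    refine habs1.trans ?_
    have hb1 : Integrable (fun u : ℂ =>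
        (2 * C₁ * C₂ / s * Set.indicator Ks (fun _ => (1:ℝ)) z) * (‖u‖ ^ 3 * φ u ^ 2)) :=
      hψ3.const_mul _
    have hb2 : Integrable (fun u : ℂ => 2 * C₁ * C₂ / s *
        ((‖u‖ ^ 3 * φ u ^ 2) * Set.indicator Ks (fun _ => (1:ℝ)) (z - s⁻¹ • u))) :=
      (hmulind _ hψ3c hψ3 hψ30 z).const_mul _
    have hmono := integral_mono_of_nonneg
      (Filter.Eventually.of_forall fun u => abs_nonneg _) (hb1.add hb2)
      (Filter.Eventually.of_forall fun u => core3 z u)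
    refine hmono.trans ?_
    simp only [Pi.add_apply]
    rw [integral_add hb1 hb2, integral_const_mul, integral_const_mul]
  -- continuity of A and B
  have hAcont : Continuous A := by
    rw [hAdef]
    refine continuous_of_dominated (F := fun z u => ρ * (f z - f (z - s⁻¹ • u)) ^ 2 * φ u ^ 2)
      (bound := fun u => C₁ ^ 2 * (‖u‖ ^ 2 * φ u ^ 2))
      (fun z => (hIA z).aestronglyMeasurable) ?_ (hψ2.const_mul _) ?_
    · intro z
      refine Filter.Eventually.of_forall fun u => ?_
      have e0 : (0:ℝ) ≤ ρ * (f z - f (z - s⁻¹ • u)) ^ 2 * φ u ^ 2 := by positivity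
      rw [Real.norm_eq_abs, abs_of_nonneg e0]
      calc ρ * (f z - f (z - s⁻¹ • u)) ^ 2 * φ u ^ 2
          ≤ (C₁ ^ 2 * ‖u‖ ^ 2) * φ u ^ 2 :=
            mul_le_mul_of_nonneg_right (coreA0 z u) (sq_nonneg _)
      _ = C₁ ^ 2 * (‖u‖ ^ 2 * φ u ^ 2) := by ring
    · refine Filter.Eventually.of_forall fun u => ?_
      have hc1 : Continuous fun z : ℂ => f (z - s⁻¹ • u) :=
        hfc.comp (continuous_id.sub continuous_const)
      exact (continuous_const.mul ((hfc.sub hc1).pow 2)).mul continuous_const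
  have hBcont : Continuous B := by
    rw [hBdef]
    refine continuous_of_dominated (F := fun z u => (fderiv ℝ f z) u ^ 2 * φ u ^ 2)
      (bound := fun u => C₁ ^ 2 * (‖u‖ ^ 2 * φ u ^ 2))
      (fun z => (hIB z).aestronglyMeasurable) ?_ (hψ2.const_mul _) ?_
    · intro z
      refine Filter.Eventually.of_forall fun u => ?_
      have e0 : (0:ℝ) ≤ (fderiv ℝ f z) u ^ 2 * φ u ^ 2 := by positivity
      rw [Real.norm_eq_abs, abs_of_nonneg e0]
      calc (fderiv ℝ f z) u ^ 2 * φ u ^ 2 ≤ (C₁ ^ 2 * ‖u‖ ^ 2) * φ u ^ 2 :=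
        mul_le_mul_of_nonneg_right (coreB0 z u) (sq_nonneg _)
      _ = C₁ ^ 2 * (‖u‖ ^ 2 * φ u ^ 2) := by ring
    · refine Filter.Eventually.of_forall fun u => ?_
      have hc1 : Continuous fun z : ℂ => (fderiv ℝ f z) u :=
        (ContinuousLinearMap.apply ℝ ℝ u).continuous.comp hgc
      exact ((hc1.pow 2).mul continuous_const)
  -- integrability of A and B
  have hAint : Integrable A := by
    refine Integrable.mono' (((hindi.const_mul (C₁ ^ 2)).mul_const M2).add
      (hconv2i.const_mul (C₁ ^ 2))) hAcont.aestronglyMeasurable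
      (Filter.Eventually.of_forall fun z => ?_)
    have hAnn : (0:ℝ) ≤ A z := integral_nonneg fun u => by positivity
    rw [Real.norm_eq_abs, abs_of_nonneg hAnn]
    have hc1 : Integrable (fun u : ℂ =>
        (C₁ ^ 2 * Set.indicator Ks (fun _ => (1:ℝ)) z) * (‖u‖ ^ 2 * φ u ^ 2)) :=
      hψ2.const_mul _
    have hc2 : Integrable (fun u : ℂ => C₁ ^ 2 *
        ((‖u‖ ^ 2 * φ u ^ 2) * Set.indicator Ks (fun _ => (1:ℝ)) (z - s⁻¹ • u))) :=
      (hmulind _ hψ2c hψ2 hψ20 z).const_mul _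
    have hmono := integral_mono_of_nonneg
      (Filter.Eventually.of_forall fun u : ℂ =>
        (by positivity : (0:ℝ) ≤ ρ * (f z - f (z - s⁻¹ • u)) ^ 2 * φ u ^ 2))
      (hc1.add hc2) (Filter.Eventually.of_forall fun u => coreA3 z u)
    refine hmono.trans ?_
    simp only [Pi.add_apply]
    rw [integral_add hc1 hc2, integral_const_mul, integral_const_mul]
  have hBsupp : HasCompactSupport B := by
    refine HasCompactSupport.intro (α := ℂ) hsupp fun z hz => ?_
    have h0 : fderiv ℝ f z = 0 := hgz0 z hz
    rw [hBdef]
    simp [h0]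
  have hBint : Integrable B := hBcont.integrable_of_hasCompactSupport hBsupp
  -- final chain
  rw [hVA]
  have hgoalB : (∫ z : ℂ, ∫ w : ℂ, (fderiv ℝ f z w) ^ 2 * φ w ^ 2) = ∫ z : ℂ, B z := rfl
  rw [hgoalB]
  have hdiff : (1/2 : ℝ) * (∫ z : ℂ, A z) - (1/2) * (∫ z : ℂ, B z)
      = (1/2) * ∫ z : ℂ, (A z - B z) := by
    rw [integral_sub hAint hBint]; ring
  rw [hdiff, abs_mul, abs_of_pos (by norm_num : (0:ℝ) < 1/2)]
  have hHint : Integrable (fun z : ℂ =>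
      (2 * C₁ * C₂ / s * Set.indicator Ks (fun _ => (1:ℝ)) z) * M3
        + 2 * C₁ * C₂ / s *
          (∫ u : ℂ, (‖u‖ ^ 3 * φ u ^ 2) * Set.indicator Ks (fun _ => (1:ℝ)) (z - s⁻¹ • u))) :=
    ((hindi.const_mul _).mul_const M3).add (hconv3i.const_mul _)
  have h1 : |∫ z : ℂ, (A z - B z)| ≤ ∫ z : ℂ, |A z - B z| := by
    simpa [Real.norm_eq_abs] using norm_integral_le_integral_norm (fun z : ℂ => A z - B z)
  have h2 : (∫ z : ℂ, |A z - B z|) ≤ ∫ z : ℂ,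
      ((2 * C₁ * C₂ / s * Set.indicator Ks (fun _ => (1:ℝ)) z) * M3
        + 2 * C₁ * C₂ / s *
          (∫ u : ℂ, (‖u‖ ^ 3 * φ u ^ 2) * Set.indicator Ks (fun _ => (1:ℝ)) (z - s⁻¹ • u))) :=
    integral_mono_of_nonneg (Filter.Eventually.of_forall fun z => abs_nonneg _)
      hHint (Filter.Eventually.of_forall fun z => hABdiff z)
  have h3 : (∫ z : ℂ,
      ((2 * C₁ * C₂ / s * Set.indicator Ks (fun _ => (1:ℝ)) z) * M3
        + 2 * C₁ * C₂ / s *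
          (∫ u : ℂ, (‖u‖ ^ 3 * φ u ^ 2) * Set.indicator Ks (fun _ => (1:ℝ)) (z - s⁻¹ • u))))
      = 2 * C₁ * C₂ / s * ((volume Ks).toReal * M3)
        + 2 * C₁ * C₂ / s * (M3 * (volume Ks).toReal) := by
    rw [integral_add ((hindi.const_mul _).mul_const M3) (hconv3i.const_mul _)]
    congr 1
    · rw [integral_mul_const, integral_const_mul, integral_indicator_const (1:ℝ) hKm]
      simp only [smul_eq_mul, mul_one, Measure.real]
      ring
    · rw [integral_const_mul, hconv3v]
  have hfinal : (1/2 : ℝ) * (2 * C₁ * C₂ / s * ((volume Ks).toReal * M3)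
        + 2 * C₁ * C₂ / s * (M3 * (volume Ks).toReal))
      = 2 * C₁ * C₂ * M3 * (volume Ks).toReal / s := by
    ring
  calc (1/2 : ℝ) * |∫ z : ℂ, (A z - B z)|
      ≤ (1/2) * ∫ z : ℂ,
        ((2 * C₁ * C₂ / s * Set.indicator Ks (fun _ => (1:ℝ)) z) * M3
          + 2 * C₁ * C₂ / s *
            (∫ u : ℂ, (‖u‖ ^ 3 * φ u ^ 2) * Set.indicator Ks (fun _ => (1:ℝ)) (z - s⁻¹ • u))) := by
        have := h1.trans h2
        linarith
  _ = 2 * C₁ * C₂ * M3 * (volume Ks).toReal / s := by rw [h3, hfinal]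
end
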